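/- arXiv:2105.07380 — 6 statements merged into one kernel-verified Lean document; each statement's English description precedes it below -/
import Mathlib

section
/- Let H be a real Hilbert space and (G_i)_{i∈I} a finite family of real Hilbert spaces. Let A : H → Set H be 3* monotone and, for every i ∈ I, let B_i : G_i → Set G_i be 3* monotone and L_i : H → G_i a continuous linear operator. Define the set-valued operator M : H → Set H by M x = A x + Σ_{i∈I} L_i*(B_i(L_i x)) (Minkowski sum, where L_i*(B_i(L_i x)) = {L_i* v : v ∈ B_i(L_i x)}), and suppose M is maximally monotone. Then: (1) the interior of (ran A + Σ_{i∈I} L_i*(ran B_i)) equals the interior of ran M, and (2) the closure of (ran A + Σ_{i∈I} L_i*(ran B_i)) equals the closure of ran M; here ran A = ⋃_{x∈H} A x, ran B_i = ⋃_{y∈G_i} B_i y, L_i*(ran B_i) = {L_i* v : v ∈ ran B_i}, and ran M = ⋃_{x∈H} M x. -/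
open RealInnerProductSpace Pointwise Filter Topology

section Weak
variable {Z : Type*} [NormedAddCommGroup Z] [InnerProductSpace ℝ Z]

lemma ultra_lim_exists (U : Ultrafilter ℕ) (f : ℕ → ℝ) (C : ℝ) (hf : ∀ n, |f n| ≤ C) :
    ∃ r : ℝ, Tendsto f U (nhds r) := by
  have hK : IsCompact (Set.Icc (-C) C) := isCompact_Icc
  have hmem : ∀ n, f n ∈ Set.Icc (-C) C := fun n => abs_le.mp (hf n)
  obtain ⟨r, _, hr⟩ := hK.ultrafilter_le_nhds (U.map f)
    (by simpa [Filter.le_principal_iff, Ultrafilter.mem_map] using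
      Filter.univ_mem' (f := (U : Filter ℕ)) (s := f ⁻¹' Set.Icc (-C) C) hmem)
  exact ⟨r, hr⟩

lemma weak_cluster [CompleteSpace Z] (U : Ultrafilter ℕ)
    (x : ℕ → Z) (C : ℝ) (hC : ∀ n, ‖x n‖ ≤ C) :
    ∃ (z : Z) (t : ℝ), (∀ y, Tendsto (fun n => ⟪x n, y⟫) U (nhds ⟪z, y⟫)) ∧
      Tendsto (fun n => ‖x n‖) U (nhds t) ∧ ‖z‖ ≤ t := by
  have hC0 : 0 ≤ C := le_trans (norm_nonneg _) (hC 0)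
  obtain ⟨t, ht⟩ := ultra_lim_exists U (fun n => ‖x n‖) C
    (fun n => by rw [abs_of_nonneg (norm_nonneg _)]; exact hC n)
  have hex : ∀ y : Z, ∃ r : ℝ, Tendsto (fun n => ⟪x n, y⟫) U (nhds r) := by
    intro y
    refine ultra_lim_exists U _ (C * ‖y‖) fun n => ?_
    calc |⟪x n, y⟫| ≤ ‖x n‖ * ‖y‖ := abs_real_inner_le_norm _ _
    _ ≤ C * ‖y‖ := by gcongr; exact hC n
  choose r hr using hex
  have hadd : ∀ y₁ y₂, r (y₁ + y₂) = r y₁ + r y₂ := by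
    intro y₁ y₂
    refine tendsto_nhds_unique (hr (y₁ + y₂)) ?_
    simpa [inner_add_right] using (hr y₁).add (hr y₂)
  have hsmul : ∀ (c : ℝ) y, r (c • y) = c * r y := by
    intro c y
    refine tendsto_nhds_unique (hr (c • y)) ?_
    simpa [inner_smul_right] using (hr y).const_mul c
  have hbound : ∀ y, |r y| ≤ C * ‖y‖ := by
    intro y
    have h1 : Tendsto (fun n => |⟪x n, y⟫|) U (nhds |r y|) := (hr y).abs
    refine le_of_tendsto h1 (Filter.univ_mem' fun n => ?_)
    calc |⟪x n, y⟫| ≤ ‖x n‖ * ‖y‖ := abs_real_inner_le_norm _ _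
    _ ≤ C * ‖y‖ := by gcongr; exact hC n
  let F : Z →L[ℝ] ℝ :=
    LinearMap.mkContinuous
      { toFun := r, map_add' := hadd, map_smul' := hsmul } C
      (fun y => by simpa using hbound y)
  obtain ⟨z, hz⟩ : ∃ z : Z, ∀ y, ⟪z, y⟫ = F y := by
    refine ⟨(InnerProductSpace.toDual ℝ Z).symm F, fun y => ?_⟩
    have := InnerProductSpace.toDual_apply_apply (𝕜 := ℝ) (E := Z)
      (x := (InnerProductSpace.toDual ℝ Z).symm F) (y := y)
    rw [← this]
    simp
  have hzy : ∀ y, Tendsto (fun n => ⟪x n, y⟫) U (nhds ⟪z, y⟫) := by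
    intro y; rw [hz y]; exact hr y
  refine ⟨z, t, hzy, ht, ?_⟩
  have h1 : Tendsto (fun n => ⟪x n, z⟫) U (nhds ⟪z, z⟫) := hzy z
  have h2 : Tendsto (fun n => ‖x n‖ * ‖z‖) U (nhds (t * ‖z‖)) := ht.mul_const _
  have hle : ⟪z, z⟫ ≤ t * ‖z‖ := by
    refine le_of_tendsto_of_tendsto h1 h2 (Filter.univ_mem' fun n => ?_)
    exact real_inner_le_norm _ _
  have ht0 : 0 ≤ t := ge_of_tendsto ht (Filter.univ_mem' fun n => norm_nonneg _)
  rcases eq_or_ne z 0 with rfl | hz0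
  · simpa using ht0
  · have : ‖z‖ * ‖z‖ ≤ t * ‖z‖ := by rwa [← real_inner_self_eq_norm_mul_norm]
    exact le_of_mul_le_mul_right (by linarith) (norm_pos_iff.mpr hz0)

end Weak

section Minty
variable {Z : Type*} [NormedAddCommGroup Z] [InnerProductSpace ℝ Z] [CompleteSpace Z]

lemma scalar_dir {c d : ℝ} (hd0 : 0 ≤ d) (h : ∀ t : ℝ, 0 < t → t ≤ 1 → 0 ≤ c + t * d) :
    0 ≤ c := by
  by_contra hc
  push_neg at hc
  have ht0 : (0:ℝ) < min 1 (-c/(2*d+1)) :=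
    lt_min one_pos (div_pos (by linarith) (by linarith))
  have h1 := h _ ht0 (min_le_left _ _)
  have hle : min 1 (-c/(2*d+1)) ≤ -c/(2*d+1) := min_le_right _ _
  have h2 : min 1 (-c/(2*d+1)) * d ≤ (-c/(2*d+1)) * d :=
    mul_le_mul_of_nonneg_right hle hd0
  have h3 : (-c/(2*d+1)) * d < -c := by
    rw [div_mul_eq_mul_div, div_lt_iff₀ (by linarith)]
    nlinarith
  linarith

lemma norm_combo (x y : Z) (t : ℝ) :
    ‖x + t • y‖^2 = ‖x‖^2 + 2*t*⟪x, y⟫ + t^2*‖y‖^2 := by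
  have h := norm_add_sq_real x (t • y)
  rw [inner_smul_right, norm_smul] at h
  rw [h, mul_pow, Real.norm_eq_abs, sq_abs]
  ring

set_option maxHeartbeats 1600000 in
/-- Minty's theorem, normalized form: a maximally monotone operator with nonempty graph
contains a point `(x, -x)` in its graph. -/
lemma minty0 (M : Z → Set Z) (p q : Z) (hpq : q ∈ M p)
    (hmono : ∀ x y u v : Z, u ∈ M x → v ∈ M y → ⟪x - y, u - v⟫ ≥ 0)
    (hmax : ∀ x u : Z, (∀ y v : Z, v ∈ M y → ⟪x - y, u - v⟫ ≥ 0) → u ∈ M x) :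
    ∃ x, -x ∈ M x := by
  classical
  set S : Z → Z → Set ℝ :=
    fun x u => {r | ∃ a b, b ∈ M a ∧ r = ⟪x, b⟫ + ⟪a, u⟫ - ⟪a, b⟫} with hSdef
  have hSne : ∀ x u, (S x u).Nonempty := fun x u => ⟨_, p, q, hpq, rfl⟩
  set F : Z → Z → ℝ := fun x u => sSup (S x u) with hFdef
  set g : Z → Z → ℝ := fun x u => F x u + ‖x‖^2/2 + ‖u‖^2/2 with hgdef
  -- on the graph, S is bounded above by ⟪a,b⟫
  have hub : ∀ a b, b ∈ M a → ∀ r ∈ S a b, r ≤ ⟪a, b⟫ := by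
    rintro a b hab r ⟨a', b', hab', rfl⟩
    have h1 := hmono a a' b b' hab hab'
    have hexp : ⟪a - a', b - b'⟫ = ⟪a, b⟫ - (⟪a, b'⟫ + ⟪a', b⟫ - ⟪a', b'⟫) := by
      simp only [inner_sub_left, inner_sub_right]; ring
    linarith [hexp ▸ h1]
  have hgraD : ∀ a b, b ∈ M a → BddAbove (S a b) ∧ F a b = ⟪a, b⟫ := by
    intro a b hab
    have hbdd : BddAbove (S a b) := ⟨⟪a, b⟫, fun r hr => hub a b hab r hr⟩
    refine ⟨hbdd, le_antisymm (csSup_le (hSne a b) (hub a b hab)) ?_⟩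
    exact le_csSup hbdd ⟨a, b, hab, by ring⟩
  -- F dominates the coupling on its domain
  have hFge : ∀ x u, BddAbove (S x u) → ⟪x, u⟫ ≤ F x u := by
    intro x u hbdd
    by_contra hlt
    push_neg at hlt
    have hmem : u ∈ M x := by
      refine hmax x u fun a b hab => ?_
      have h1 : ⟪x, b⟫ + ⟪a, u⟫ - ⟪a, b⟫ ≤ F x u := le_csSup hbdd ⟨a, b, hab, rfl⟩
      have hexp : ⟪x - a, u - b⟫ = ⟪x, u⟫ - (⟪x, b⟫ + ⟪a, u⟫ - ⟪a, b⟫) := by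
        simp only [inner_sub_left, inner_sub_right]; ring
      rw [hexp]; linarith
    have := le_csSup hbdd (⟨x, u, hmem, by ring⟩ : ⟪x, u⟫ ∈ S x u)
    linarith
  -- the infimum of g over the domain
  set T : Set ℝ := {r | ∃ x u, BddAbove (S x u) ∧ r = g x u} with hTdef
  have hTne : T.Nonempty := ⟨g p q, p, q, (hgraD p q hpq).1, rfl⟩
  have hT0 : ∀ r ∈ T, 0 ≤ r := by
    rintro r ⟨x, u, hbdd, rfl⟩
    have h1 := hFge x u hbdd
    have h2 := norm_add_sq_real x u
    have h3 := sq_nonneg (‖x + u‖)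
    simp only [hgdef]
    nlinarith
  set m : ℝ := sInf T with hmdef
  have hm0 : 0 ≤ m := le_csInf hTne hT0
  have hbelow : BddBelow T := ⟨0, hT0⟩
  -- minimizing sequence
  have hseq : ∀ n : ℕ, ∃ z : Z × Z, BddAbove (S z.1 z.2) ∧
      g z.1 z.2 < m + 1/(n+1) := by
    intro n
    have hlt : m < m + 1/(n+1) := by
      have : (0:ℝ) < 1/(n+1) := by positivity
      linarith
    obtain ⟨r, hrT, hr⟩ := exists_lt_of_csInf_lt hTne hlt
    obtain ⟨x, u, hbdd, rfl⟩ := hrT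
    exact ⟨(x, u), hbdd, hr⟩
  choose zs hzD hzlt using hseq
  set xs : ℕ → Z := fun n => (zs n).1 with hxs
  set us : ℕ → Z := fun n => (zs n).2 with hus
  -- boundedness of the minimizing sequence
  have hkey : ∀ n, ⟪xs n, q⟫ + ⟪p, us n⟫ - ⟪p, q⟫ + ‖xs n‖^2/2 + ‖us n‖^2/2 < m + 1 := by
    intro n
    have h1 : ⟪xs n, q⟫ + ⟪p, us n⟫ - ⟪p, q⟫ ≤ F (xs n) (us n) :=
      le_csSup (hzD n) ⟨p, q, hpq, rfl⟩
    have h2 := hzlt n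
    have h3 : 1/((n:ℝ)+1) ≤ 1 := by
      rw [div_le_one (by positivity)]; linarith [Nat.cast_nonneg (α := ℝ) n]
    simp only [hgdef] at h2
    linarith
  obtain ⟨K, hK0, hKx, hKu⟩ : ∃ K, 0 ≤ K ∧ (∀ n, ‖xs n‖ ≤ K) ∧ (∀ n, ‖us n‖ ≤ K) := by
    set R : ℝ := 2*(m + 1) + 2*‖p‖*‖q‖ + ‖p‖^2 + ‖q‖^2 with hR
    have hR0 : 0 ≤ R := by positivity
    refine ⟨‖p‖ + ‖q‖ + R + 1, by positivity, fun n => ?_, fun n => ?_⟩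
    · have h1 := hkey n
      have h2 : -(‖xs n‖*‖q‖) ≤ ⟪xs n, q⟫ := neg_le_of_abs_le (abs_real_inner_le_norm _ _)
      have h3 : -(‖p‖*‖us n‖) ≤ ⟪p, us n⟫ := neg_le_of_abs_le (abs_real_inner_le_norm _ _)
      have h4 : -(‖p‖*‖q‖) ≤ ⟪p, q⟫ ∧ ⟪p, q⟫ ≤ ‖p‖*‖q‖ := abs_le.mp (abs_real_inner_le_norm _ _)
      nlinarith [norm_nonneg (xs n), norm_nonneg (us n), norm_nonneg p, norm_nonneg q,
        sq_nonneg (‖us n‖ - ‖p‖), sq_nonneg (‖xs n‖ - ‖q‖ - R - 1)]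
    · have h1 := hkey n
      have h2 : -(‖xs n‖*‖q‖) ≤ ⟪xs n, q⟫ := neg_le_of_abs_le (abs_real_inner_le_norm _ _)
      have h3 : -(‖p‖*‖us n‖) ≤ ⟪p, us n⟫ := neg_le_of_abs_le (abs_real_inner_le_norm _ _)
      have h4 : -(‖p‖*‖q‖) ≤ ⟪p, q⟫ ∧ ⟪p, q⟫ ≤ ‖p‖*‖q‖ := abs_le.mp (abs_real_inner_le_norm _ _)
      nlinarith [norm_nonneg (xs n), norm_nonneg (us n), norm_nonneg p, norm_nonneg q,
        sq_nonneg (‖xs n‖ - ‖q‖), sq_nonneg (‖us n‖ - ‖p‖ - R - 1)]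
  -- weak cluster points
  set U : Ultrafilter ℕ := Ultrafilter.of atTop with hU
  have hUa : (U : Filter ℕ) ≤ (atTop : Filter ℕ) := Ultrafilter.of_le _
  obtain ⟨xb, t1, hxbw, hxbn, hxbt⟩ := weak_cluster U xs K hKx
  obtain ⟨ub, t2, hubw, hubn, hubt⟩ := weak_cluster U us K hKu
  have ht10 : 0 ≤ t1 := le_trans (norm_nonneg _) hxbt
  have ht20 : 0 ≤ t2 := le_trans (norm_nonneg _) hubt
  -- limit inequality: every element of S xb ub is ≤ m - t1^2/2 - t2^2/2
  have hlim : ∀ a b, b ∈ M a →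
      ⟪xb, b⟫ + ⟪a, ub⟫ - ⟪a, b⟫ + t1^2/2 + t2^2/2 ≤ m := by
    intro a b hab
    have hseqineq : ∀ n, ⟪xs n, b⟫ + ⟪us n, a⟫ - ⟪a, b⟫ + ‖xs n‖^2/2 + ‖us n‖^2/2
        ≤ m + 1/(n+1) := by
      intro n
      have h1 : ⟪xs n, b⟫ + ⟪a, us n⟫ - ⟪a, b⟫ ≤ F (xs n) (us n) :=
        le_csSup (hzD n) ⟨a, b, hab, rfl⟩
      have h2 := hzlt n
      simp only [hgdef] at h2
      have hcomm : ⟪us n, a⟫ = ⟪a, us n⟫ := real_inner_comm _ _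
      linarith [hcomm ▸ h1, h1, hcomm]
    have hL : Tendsto (fun n => ⟪xs n, b⟫ + ⟪us n, a⟫ - ⟪a, b⟫ + ‖xs n‖^2/2 + ‖us n‖^2/2)
        U (nhds (⟪xb, b⟫ + ⟪ub, a⟫ - ⟪a, b⟫ + t1^2/2 + t2^2/2)) := by
      have h1 := hxbw b
      have h2 := hubw a
      have h3 : Tendsto (fun n => ‖xs n‖^2) U (nhds (t1^2)) := by
        simpa [pow_two] using hxbn.mul hxbn
      have h4 : Tendsto (fun n => ‖us n‖^2) U (nhds (t2^2)) := by
        simpa [pow_two] using hubn.mul hubn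
      exact (((h1.add h2).sub tendsto_const_nhds).add (h3.div_const 2)).add (h4.div_const 2)
    have hR : Tendsto (fun n : ℕ => m + 1/((n:ℝ)+1)) U (nhds (m + 0)) := by
      refine Tendsto.mono_left ?_ hUa
      exact tendsto_const_nhds.add tendsto_one_div_add_atTop_nhds_zero_nat
    have := le_of_tendsto_of_tendsto hL hR (Filter.univ_mem' fun n => hseqineq n)
    have hcomm : ⟪ub, a⟫ = ⟪a, ub⟫ := real_inner_comm _ _
    linarith [this, hcomm]
  have hxbD : BddAbove (S xb ub) := by
    refine ⟨m - t1^2/2 - t2^2/2, ?_⟩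
    rintro r ⟨a, b, hab, rfl⟩
    linarith [hlim a b hab]
  have hgbar_le : g xb ub ≤ m := by
    have h1 : F xb ub ≤ m - t1^2/2 - t2^2/2 := by
      refine csSup_le (hSne _ _) ?_
      rintro r ⟨a, b, hab, rfl⟩
      linarith [hlim a b hab]
    have h2 : ‖xb‖^2 ≤ t1^2 := by nlinarith [norm_nonneg xb]
    have h3 : ‖ub‖^2 ≤ t2^2 := by nlinarith [norm_nonneg ub]
    simp only [hgdef]
    linarith
  have hm_le : m ≤ g xb ub := csInf_le hbelow ⟨xb, ub, hxbD, rfl⟩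
  have hgbar : g xb ub = m := le_antisymm hgbar_le hm_le
  set Fb : ℝ := F xb ub with hFb
  have hFbge : ⟪xb, ub⟫ ≤ Fb := hFge xb ub hxbD
  -- directional derivative inequality
  have hdir : ∀ a b, b ∈ M a →
      0 ≤ ⟪a, b⟫ - Fb + ⟪xb, a - xb⟫ + ⟪ub, b - ub⟫ := by
    intro a b hab
    refine scalar_dir (d := (‖a - xb‖^2 + ‖b - ub‖^2)/2) (by positivity) ?_
    intro t ht0 ht1
    have hubS : ∀ r ∈ S (xb + t • (a - xb)) (ub + t • (b - ub)),
        r ≤ (1 - t) * Fb + t * ⟪a, b⟫ := by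
      rintro r ⟨a', b', hab', rfl⟩
      have h1 : ⟪xb, b'⟫ + ⟪a', ub⟫ - ⟪a', b'⟫ ≤ Fb := le_csSup hxbD ⟨a', b', hab', rfl⟩
      have h2 : ⟪a, b'⟫ + ⟪a', b⟫ - ⟪a', b'⟫ ≤ ⟪a, b⟫ := hub a b hab _ ⟨a', b', hab', rfl⟩
      have hexp : ⟪xb + t • (a - xb), b'⟫ + ⟪a', ub + t • (b - ub)⟫ - ⟪a', b'⟫
          = (1 - t) * (⟪xb, b'⟫ + ⟪a', ub⟫ - ⟪a', b'⟫)
            + t * (⟪a, b'⟫ + ⟪a', b⟫ - ⟪a', b'⟫) := by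
        simp only [inner_add_left, inner_add_right, inner_smul_left,
          inner_smul_right, inner_sub_left, inner_sub_right, RCLike.conj_to_real]
        ring
      rw [hexp]
      have h1t : 0 ≤ 1 - t := by linarith
      exact add_le_add (mul_le_mul_of_nonneg_left h1 h1t) (mul_le_mul_of_nonneg_left h2 ht0.le)
    have hbddt : BddAbove (S (xb + t • (a - xb)) (ub + t • (b - ub))) := ⟨_, hubS⟩
    have hFt : F (xb + t • (a - xb)) (ub + t • (b - ub)) ≤ (1 - t) * Fb + t * ⟪a, b⟫ :=
      csSup_le (hSne _ _) hubS
    have hmt : m ≤ g (xb + t • (a - xb)) (ub + t • (b - ub)) :=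
      csInf_le hbelow ⟨_, _, hbddt, rfl⟩
    have hnx : ‖xb + t • (a - xb)‖^2 = ‖xb‖^2 + 2*t*⟪xb, a - xb⟫ + t^2*‖a - xb‖^2 :=
      norm_combo _ _ _
    have hnu : ‖ub + t • (b - ub)‖^2 = ‖ub‖^2 + 2*t*⟪ub, b - ub⟫ + t^2*‖b - ub‖^2 :=
      norm_combo _ _ _
    have hgb : Fb + ‖xb‖^2/2 + ‖ub‖^2/2 = m := hgbar
    simp only [hgdef] at hmt
    rw [hnx, hnu] at hmt
    have h0 : 0 ≤ t * ((⟪a, b⟫ - Fb + ⟪xb, a - xb⟫ + ⟪ub, b - ub⟫)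
        + t * ((‖a - xb‖^2 + ‖b - ub‖^2)/2)) := by nlinarith [hmt, hFt, hgb]
    exact (mul_nonneg_iff_of_pos_left ht0).mp h0
  -- conclude
  have key : ∀ a b, b ∈ M a → ‖xb + ub‖^2 ≤ ⟪-ub - a, -xb - b⟫ := by
    intro a b hab
    have h1 := hdir a b hab
    have hexp1 : ⟪-ub - a, -xb - b⟫
        = ⟪ub, xb⟫ + ⟪ub, b⟫ + ⟪a, xb⟫ + ⟪a, b⟫ := by
      simp only [inner_sub_left, inner_sub_right, inner_neg_left, inner_neg_right]
      ring
    have hexp2 : ‖xb + ub‖^2 = ‖xb‖^2 + 2*⟪xb, ub⟫ + ‖ub‖^2 := norm_add_sq_real xb ub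
    simp only [inner_sub_right] at h1
    rw [hexp1, hexp2]
    rw [real_inner_self_eq_norm_sq xb, real_inner_self_eq_norm_sq ub] at h1
    have hc1 : ⟪a, xb⟫ = ⟪xb, a⟫ := real_inner_comm xb a
    have hc2 : ⟪ub, xb⟫ = ⟪xb, ub⟫ := real_inner_comm xb ub
    rw [hc1, hc2]
    linarith
  have hmem : -xb ∈ M (-ub) := by
    refine hmax (-ub) (-xb) fun a b hab => ?_
    have h1 := key a b hab
    have h2 : (0:ℝ) ≤ ‖xb + ub‖^2 := sq_nonneg _
    linarith
  have hzero : xb + ub = 0 := by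
    have h1 := key (-ub) (-xb) hmem
    have h2 : ⟪(-ub - -ub : Z), -xb - -xb⟫ = 0 := by simp
    rw [h2] at h1
    have hn : ‖xb + ub‖^2 = 0 := le_antisymm h1 (sq_nonneg _)
    have := pow_eq_zero_iff (n := 2) (by norm_num) |>.mp hn
    exact norm_eq_zero.mp this
  have hxu : -ub = xb := by
    have : xb = -ub := eq_neg_of_add_eq_zero_left hzero
    exact this.symm
  rw [hxu] at hmem
  exact ⟨xb, hmem⟩


/-- Minty's surjectivity: for maximally monotone `M`, any `w`, and `lam > 0`,
there is `x` with `w - lam • x ∈ M x`. -/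
lemma minty_shift (M : Z → Set Z) (p q : Z) (hpq : q ∈ M p)
    (hmono : ∀ x y u v : Z, u ∈ M x → v ∈ M y → ⟪x - y, u - v⟫ ≥ 0)
    (hmax : ∀ x u : Z, (∀ y v : Z, v ∈ M y → ⟪x - y, u - v⟫ ≥ 0) → u ∈ M x)
    (w : Z) (lam : ℝ) (hlam : 0 < lam) :
    ∃ x, w - lam • x ∈ M x := by
  set N : Z → Set Z := fun x => (fun v => lam⁻¹ • (v - w)) '' M x with hN
  have hlam' : lam ≠ 0 := ne_of_gt hlam
  have hNmono : ∀ x y u v : Z, u ∈ N x → v ∈ N y → ⟪x - y, u - v⟫ ≥ 0 := by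
    rintro x y _ _ ⟨u, hu, rfl⟩ ⟨v, hv, rfl⟩
    have : lam⁻¹ • (u - w) - lam⁻¹ • (v - w) = lam⁻¹ • (u - v) := by
      rw [← smul_sub]; congr 1; abel
    rw [this, inner_smul_right]
    have := hmono x y u v hu hv
    positivity
  have hNmax : ∀ x u : Z, (∀ y v : Z, v ∈ N y → ⟪x - y, u - v⟫ ≥ 0) → u ∈ N x := by
    intro x u hx
    have hmem : w + lam • u ∈ M x := by
      refine hmax x (w + lam • u) fun y v hv => ?_
      have hvN : lam⁻¹ • (v - w) ∈ N y := ⟨v, hv, rfl⟩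
      have h1 := hx y _ hvN
      have hid : w + lam • u - v = lam • (u - lam⁻¹ • (v - w)) := by
        rw [smul_sub, smul_smul, mul_inv_cancel₀ hlam', one_smul]
        abel
      rw [hid, inner_smul_right]
      positivity
    exact ⟨w + lam • u, hmem, by simp only []; rw [add_sub_cancel_left, inv_smul_smul₀ hlam']⟩
  obtain ⟨x, hx⟩ := minty0 N p (lam⁻¹ • (q - w)) ⟨q, hpq, rfl⟩ hNmono hNmax
  obtain ⟨v, hv, hveq⟩ := hx
  refine ⟨x, ?_⟩
  have : v = w - lam • x := by
    simp only [] at hveq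
    have h1 : lam • (lam⁻¹ • (v - w)) = lam • (-x) := by rw [hveq]
    rw [smul_inv_smul₀ hlam'] at h1
    have : v - w = -(lam • x) := by rw [h1, smul_neg]
    linear_combination (norm := abel) this
  rwa [← this]

set_option maxHeartbeats 3000000 in
/-- Core Brézis–Haraux argument. -/
theorem brezis_haraux_core [CompleteSpace Z] (M : Z → Set Z)
    (hmono : ∀ x y u v : Z, u ∈ M x → v ∈ M y → ⟪x - y, u - v⟫ ≥ 0)
    (hmax : ∀ x u : Z, (∀ y v : Z, v ∈ M y → ⟪x - y, u - v⟫ ≥ 0) → u ∈ M x)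
    (z₀ v₀ : Z) (hz₀ : v₀ ∈ M z₀) (Sset : Set Z) (hMS : (⋃ x, M x) ⊆ Sset)
    (hstar : ∀ w ∈ Sset, ∃ C, ∀ y v, v ∈ M y → ⟪y - z₀, w - v⟫ ≤ C) :
    interior Sset = interior (⋃ x, M x) ∧ closure Sset = closure (⋃ x, M x) := by
  -- Part 1: every point of Sset is in the closure of the range of M
  have hcl : Sset ⊆ closure (⋃ x, M x) := by
    intro w hw
    rw [Metric.mem_closure_iff]
    intro ε hε
    obtain ⟨C, hC⟩ := hstar w hw
    set C' : ℝ := max C 0 with hC'def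
    have hC'0 : 0 ≤ C' := le_max_right _ _
    set lam : ℝ := min 1 (ε^2/(2*C' + ‖z₀‖^2 + 1)) with hlamdef
    have hlam0 : 0 < lam := lt_min one_pos (by positivity)
    have hlam1 : lam ≤ 1 := min_le_left _ _
    have hlam2 : lam * (2*C' + ‖z₀‖^2 + 1) ≤ ε^2 := by
      rw [← le_div_iff₀ (by positivity)]
      exact min_le_right _ _
    obtain ⟨x, hx⟩ := minty_shift M z₀ v₀ hz₀ hmono hmax w lam hlam0
    refine ⟨w - lam • x, Set.mem_iUnion.mpr ⟨x, hx⟩, ?_⟩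
    have hb := hC x (w - lam • x) hx
    have hid : w - (w - lam • x) = lam • x := by abel
    rw [hid, inner_smul_right] at hb
    have hexp : ⟪x - z₀, x⟫ = ‖x‖^2 - ⟪z₀, x⟫ := by
      rw [inner_sub_left, real_inner_self_eq_norm_sq]
    have hzx : ⟪z₀, x⟫ ≤ ‖z₀‖ * ‖x‖ := real_inner_le_norm _ _
    have hdist : dist w (w - lam • x) = lam * ‖x‖ := by
      rw [dist_eq_norm, hid, norm_smul, Real.norm_eq_abs, abs_of_pos hlam0]
    rw [hdist]
    have h1 : lam * ‖x‖^2 - lam * (‖z₀‖ * ‖x‖) ≤ C' := by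
      have h2 : lam * ⟪x - z₀, x⟫ ≤ C' := le_trans hb (le_max_left _ _)
      rw [hexp] at h2
      nlinarith [hzx, hlam0]
    have hsq : (lam*‖x‖)^2 ≤ 2*lam*C' + lam^2*‖z₀‖^2 := by
      nlinarith [mul_le_mul_of_nonneg_left h1 hlam0.le,
        sq_nonneg (lam*‖x‖ - lam*‖z₀‖)]
    have hlt : (lam*‖x‖)^2 < ε^2 := by
      nlinarith [hsq, hlam2, hlam0, hlam1, hC'0,
        mul_nonneg (mul_nonneg hlam0.le (sub_nonneg.mpr hlam1)) (sq_nonneg ‖z₀‖)]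
    nlinarith [mul_nonneg hlam0.le (norm_nonneg x), hε]
  -- Part 2: interior of Sset is contained in the range of M
  have hint : interior Sset ⊆ ⋃ x, M x := by
    intro w hw
    obtain ⟨ε, hε0, hball⟩ := Metric.mem_nhds_iff.mp (mem_interior_iff_mem_nhds.mp hw)
    set r : ℝ := ε/2 with hrdef
    have hr0 : 0 < r := by positivity
    have hballr : Metric.closedBall w r ⊆ Sset := by
      refine subset_trans ?_ hball
      exact (Metric.closedBall_subset_ball (by simp only [hrdef]; linarith))
    -- Baire category on the closed ball
    haveI : Nonempty (Metric.closedBall w r) :=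
      ⟨⟨w, Metric.mem_closedBall_self hr0.le⟩⟩
    haveI : CompleteSpace (Metric.closedBall w r) :=
      (Metric.isClosed_closedBall).completeSpace_coe
    obtain ⟨n, w₁, hw₁⟩ : ∃ (n : ℕ) (w₁ : Metric.closedBall w r),
        w₁ ∈ interior {ww : Metric.closedBall w r |
          ∀ y v, v ∈ M y → ⟪y - z₀, (ww : Z) - v⟫ ≤ n} := by
      have hclosen : ∀ n : ℕ, IsClosed {ww : Metric.closedBall w r |
          ∀ y v, v ∈ M y → ⟪y - z₀, (ww : Z) - v⟫ ≤ n} := by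
        intro n
        have : {ww : Metric.closedBall w r | ∀ y v, v ∈ M y → ⟪y - z₀, (ww : Z) - v⟫ ≤ n}
            = ⋂ (y) (v) (_ : v ∈ M y),
              {ww : Metric.closedBall w r | ⟪y - z₀, (ww : Z) - v⟫ ≤ (n : ℝ)} := by
          ext ww; simp [Set.mem_iInter]
        rw [this]
        refine isClosed_iInter fun y => isClosed_iInter fun v => isClosed_iInter fun _ => ?_
        have hcont : Continuous fun ww : Metric.closedBall w r => ⟪y - z₀, (ww : Z) - v⟫ :=
          continuous_const.inner (continuous_subtype_val.sub continuous_const)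
        exact isClosed_le hcont continuous_const
      have hcover : (⋃ n : ℕ, {ww : Metric.closedBall w r |
          ∀ y v, v ∈ M y → ⟪y - z₀, (ww : Z) - v⟫ ≤ n}) = Set.univ := by
        rw [Set.eq_univ_iff_forall]
        intro ww
        obtain ⟨C, hC⟩ := hstar (ww : Z) (hballr ww.2)
        refine Set.mem_iUnion.mpr ⟨⌈max C 0⌉₊, fun y v hv => ?_⟩
        exact le_trans (hC y v hv) (le_trans (le_max_left _ _) (Nat.le_ceil _))
      obtain ⟨n, hn⟩ := nonempty_interior_of_iUnion_of_closed hclosen hcover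
      obtain ⟨w₁, hw₁⟩ := hn
      exact ⟨n, w₁, hw₁⟩
    -- extract a relative ball
    obtain ⟨δ, hδ0, hδ⟩ := Metric.mem_nhds_iff.mp (isOpen_interior.mem_nhds hw₁)
    have hrel : ∀ w' : Z, w' ∈ Metric.closedBall w r → dist w' (w₁ : Z) < δ →
        ∀ y v, v ∈ M y → ⟪y - z₀, w' - v⟫ ≤ n := by
      intro w' hw' hd y v hv
      have hmem : (⟨w', hw'⟩ : Metric.closedBall w r) ∈ Metric.ball w₁ δ := by
        rw [Metric.mem_ball, Subtype.dist_eq]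
        exact hd
      exact interior_subset (hδ hmem) y v hv
    -- produce a genuine ball inside
    set d : ℝ := dist (w₁ : Z) w with hddef
    have hd0 : 0 ≤ d := dist_nonneg
    have hdr : d ≤ r := Metric.mem_closedBall.mp w₁.2
    set τ : ℝ := min 1 (δ/(2*(d+1))) with hτdef
    have hτ0 : 0 < τ := lt_min one_pos (by positivity)
    have hτ1 : τ ≤ 1 := min_le_left _ _
    have hτd : τ * d ≤ δ/2 := by
      have h1 : τ ≤ δ/(2*(d+1)) := min_le_right _ _
      have h2 : τ * d ≤ δ/(2*(d+1)) * d := by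
        apply mul_le_mul_of_nonneg_right h1 hd0
      calc τ * d ≤ δ/(2*(d+1)) * d := h2
      _ ≤ δ/2 := by
        rw [div_mul_eq_mul_div, div_le_div_iff₀ (by positivity) (by norm_num)]
        nlinarith
    set w₂ : Z := w + (1-τ) • ((w₁ : Z) - w) with hw₂def
    have hw₂w : dist w₂ w = (1-τ) * d := by
      rw [hddef, dist_eq_norm, dist_eq_norm]
      have : w₂ - w = (1-τ) • ((w₁ : Z) - w) := by rw [hw₂def]; abel
      rw [this, norm_smul, Real.norm_eq_abs, abs_of_nonneg (by linarith)]
    have hw₂w₁ : dist w₂ (w₁ : Z) = τ * d := by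
      rw [hddef, dist_eq_norm, dist_eq_norm]
      have : w₂ - (w₁ : Z) = -(τ • ((w₁ : Z) - w)) := by
        rw [hw₂def, sub_smul, one_smul]; abel
      rw [this, norm_neg, norm_smul, Real.norm_eq_abs, abs_of_pos hτ0]
    set δ₂ : ℝ := min (δ/4) (τ*r/2) with hδ₂def
    have hδ₂0 : 0 < δ₂ := lt_min (by positivity) (by positivity)
    have hU2 : ∀ w' : Z, dist w' w₂ < δ₂ → ∀ y v, v ∈ M y → ⟪y - z₀, w' - v⟫ ≤ n := by
      intro w' hd' y v hv
      have hin : w' ∈ Metric.closedBall w r := by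
        rw [Metric.mem_closedBall]
        calc dist w' w ≤ dist w' w₂ + dist w₂ w := dist_triangle _ _ _
        _ ≤ δ₂ + (1-τ)*d := by rw [hw₂w]; linarith
        _ ≤ τ*r/2 + (1-τ)*r := by
          have h1 : δ₂ ≤ τ*r/2 := min_le_right _ _
          have h2 : (1-τ)*d ≤ (1-τ)*r := by
            apply mul_le_mul_of_nonneg_left hdr (by linarith)
          linarith
        _ ≤ r := by nlinarith
      have hnear : dist w' (w₁ : Z) < δ := by
        calc dist w' (w₁ : Z) ≤ dist w' w₂ + dist w₂ (w₁ : Z) := dist_triangle _ _ _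
        _ < δ₂ + τ*d := by rw [hw₂w₁]; linarith
        _ ≤ δ/4 + δ/2 := by
          have h1 : δ₂ ≤ δ/4 := min_le_left _ _
          linarith
        _ < δ := by linarith
      exact hrel w' hin hnear y v hv
    -- convexity transfer: uniform bound on a ball centered at w
    set α : ℝ := min (1/2) (r/(2*(dist w w₂ + 1))) with hαdef
    have hα0 : 0 < α := lt_min (by norm_num) (by positivity)
    have hα1 : α ≤ 1/2 := min_le_left _ _
    set u : Z := (1-α)⁻¹ • (w - α • w₂) with hudef
    have h1α : (0:ℝ) < 1 - α := by linarith
    have huw : dist u w < ε := by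
      have hpre : (1-α) • (u - w) = α • (w - w₂) := by
        rw [hudef, smul_sub, smul_inv_smul₀ (ne_of_gt h1α), sub_smul, one_smul,
          smul_sub]
        abel
      have hid : u - w = (1-α)⁻¹ • (α • (w - w₂)) := by
        rw [← hpre, inv_smul_smul₀ (ne_of_gt h1α)]
      rw [dist_eq_norm, hid, norm_smul, norm_smul, Real.norm_eq_abs, Real.norm_eq_abs,
        abs_of_pos (inv_pos.mpr h1α), abs_of_pos hα0]
      have h2 : α * ‖w - w₂‖ ≤ r/2 := by
        have h3 : α ≤ r/(2*(dist w w₂ + 1)) := min_le_right _ _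
        have h4 : α * ‖w - w₂‖ ≤ r/(2*(dist w w₂ + 1)) * ‖w - w₂‖ :=
          mul_le_mul_of_nonneg_right h3 (norm_nonneg _)
        have h5 : ‖w - w₂‖ = dist w w₂ := (dist_eq_norm w w₂).symm
        rw [h5] at h4 ⊢
        calc α * dist w w₂ ≤ r/(2*(dist w w₂ + 1)) * dist w w₂ := h4
        _ ≤ r/2 := by
          rw [div_mul_eq_mul_div, div_le_div_iff₀ (by positivity) (by norm_num)]
          nlinarith [dist_nonneg (x := w) (y := w₂)]
      have h6 : (1-α)⁻¹ ≤ 2 := by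
        rw [inv_le_comm₀ h1α (by norm_num)]
        linarith
      have h7 : (1-α)⁻¹ * (α * ‖w - w₂‖) ≤ 2 * (r/2) :=
        mul_le_mul h6 h2 (mul_nonneg hα0.le (norm_nonneg _)) (by norm_num)
      have hrε : r = ε/2 := hrdef
      linarith [h7, hε0]
    have huS : u ∈ Sset := hball (Metric.mem_ball.mpr huw)
    obtain ⟨Cu, hCu⟩ := hstar u huS
    set ρ : ℝ := α * δ₂ with hρdef
    have hρ0 : 0 < ρ := by positivity
    set Cstar : ℝ := α * n + (1-α) * Cu with hCstardef
    have huni : ∀ w' : Z, dist w' w < ρ → ∀ y v, v ∈ M y → ⟪y - z₀, w' - v⟫ ≤ Cstar := by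
      intro w' hd' y v hv
      set qq : Z := w₂ + α⁻¹ • (w' - w) with hqqdef
      have hqd : dist qq w₂ < δ₂ := by
        rw [dist_eq_norm]
        have : qq - w₂ = α⁻¹ • (w' - w) := by rw [hqqdef]; abel
        rw [this, norm_smul, Real.norm_eq_abs, abs_of_pos (inv_pos.mpr hα0)]
        rw [← dist_eq_norm]
        rw [inv_mul_lt_iff₀ hα0]
        calc dist w' w < ρ := hd'
        _ = α * δ₂ := rfl
      have hq := hU2 qq hqd y v hv
      have hu := hCu y v hv
      have hsplit : w' - v = α • (qq - v) + (1-α) • (u - v) := by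
        have e1 : α • (qq - v) = α • w₂ + (w' - w) - α • v := by
          rw [hqqdef, smul_sub, smul_add, smul_smul, mul_inv_cancel₀ (ne_of_gt hα0), one_smul]
        have e2 : (1-α) • (u - v) = (w - α • w₂) - (1-α) • v := by
          rw [hudef, smul_sub, smul_inv_smul₀ (ne_of_gt h1α)]
        rw [e1, e2, sub_smul, one_smul]
        abel
      rw [hsplit, inner_add_right, inner_smul_right, inner_smul_right]
      have h1 : α * ⟪y - z₀, qq - v⟫ ≤ α * n := mul_le_mul_of_nonneg_left hq hα0.le
      have h2 : (1-α) * ⟪y - z₀, u - v⟫ ≤ (1-α) * Cu := mul_le_mul_of_nonneg_left hu h1α.le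
      rw [hCstardef]
      linarith
    -- bound solutions of the regularized problems
    have hsol : ∀ k : ℕ, ∃ x : Z, w - (1/((k:ℝ)+1)) • x ∈ M x := fun k =>
      minty_shift M z₀ v₀ hz₀ hmono hmax w (1/((k:ℝ)+1)) (by positivity)
    choose xs hxs using hsol
    set K : ℝ := ‖z₀‖ + max 0 ((Cstar + ‖z₀‖^2/4)*(2/ρ)) with hKdef
    have hKb : ∀ k, ‖xs k‖ ≤ K := by
      intro k
      set lam : ℝ := 1/((k:ℝ)+1) with hlamdef
      have hlam0 : 0 < lam := by positivity
      have hlam1 : lam ≤ 1 := by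
        rw [hlamdef, div_le_one (by positivity)]
        linarith [Nat.cast_nonneg (α := ℝ) k]
      rcases eq_or_ne (xs k) z₀ with heq | hne
      · rw [heq, hKdef]
        have : (0:ℝ) ≤ max 0 ((Cstar + ‖z₀‖^2/4)*(2/ρ)) := le_max_left _ _
        linarith
      · set e : Z := xs k - z₀ with hedef
        have he0 : 0 < ‖e‖ := by
          rw [hedef, norm_pos_iff, sub_ne_zero]
          exact hne
        set w' : Z := w + ((ρ/2)/‖e‖) • e with hw'def
        have hd' : dist w' w < ρ := by
          rw [dist_eq_norm]
          have : w' - w = ((ρ/2)/‖e‖) • e := by rw [hw'def]; abel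
          rw [this, norm_smul, Real.norm_eq_abs, abs_of_pos (by positivity),
            div_mul_cancel₀ _ (ne_of_gt he0)]
          linarith
        have hb := huni w' hd' (xs k) (w - lam • (xs k)) (hxs k)
        have hid : w' - (w - lam • (xs k)) = ((ρ/2)/‖e‖) • e + lam • (xs k) := by
          rw [hw'def]; abel
        rw [hid, inner_add_right, inner_smul_right, inner_smul_right] at hb
        have hee : ⟪e, e⟫ = ‖e‖^2 := real_inner_self_eq_norm_sq e
        have hterm1 : ((ρ/2)/‖e‖) * ⟪xs k - z₀, e⟫ = (ρ/2) * ‖e‖ := by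
          rw [← hedef, hee]
          field_simp
        have hterm2 : -(‖z₀‖^2/4) ≤ lam * ⟪xs k - z₀, xs k⟫ := by
          have hexp : ⟪xs k - z₀, xs k⟫ = ‖xs k‖^2 - ⟪z₀, xs k⟫ := by
            rw [inner_sub_left, real_inner_self_eq_norm_sq]
          have hzx : ⟪z₀, xs k⟫ ≤ ‖z₀‖ * ‖xs k‖ := real_inner_le_norm _ _
          have hq : -(‖z₀‖^2/4) ≤ ⟪xs k - z₀, xs k⟫ := by
            rw [hexp]
            nlinarith [sq_nonneg (‖xs k‖ - ‖z₀‖/2)]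
          rcases le_or_gt 0 (⟪xs k - z₀, xs k⟫) with hc | hc
          · nlinarith
          · nlinarith
        have hEbound : ‖e‖ ≤ (Cstar + ‖z₀‖^2/4)*(2/ρ) := by
          have h1 : (ρ/2) * ‖e‖ ≤ Cstar + ‖z₀‖^2/4 := by
            have := hb
            rw [hterm1] at this
            linarith [hterm2]
          have h2 : ‖e‖ ≤ (Cstar + ‖z₀‖^2/4) / (ρ/2) := by
            rw [le_div_iff₀ (by linarith)]
            linarith [h1]
          have h3 : (Cstar + ‖z₀‖^2/4) / (ρ/2) = (Cstar + ‖z₀‖^2/4)*(2/ρ) := by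
            field_simp
          rw [h3] at h2
          exact h2
        have : ‖xs k‖ ≤ ‖e‖ + ‖z₀‖ := by
          have : xs k = e + z₀ := by rw [hedef]; abel
          rw [this]
          exact norm_add_le _ _
        rw [hKdef]
        have h2 : ‖e‖ ≤ max 0 ((Cstar + ‖z₀‖^2/4)*(2/ρ)) :=
          le_trans hEbound (le_max_right _ _)
        linarith
    -- weak cluster point and maximality
    set U : Ultrafilter ℕ := Ultrafilter.of atTop with hU
    have hUa : (U : Filter ℕ) ≤ (atTop : Filter ℕ) := Ultrafilter.of_le _
    have hK0 : 0 ≤ K := le_trans (norm_nonneg _) (hKb 0)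
    obtain ⟨xbar, t, hxw, hxn, hxt⟩ := weak_cluster U xs K hKb
    have hwin : w ∈ M xbar := by
      refine hmax xbar w fun y v hv => ?_
      have hseq : ∀ k : ℕ, ⟪xs k, w - v⟫ - ⟪y, w - v⟫ ≥ -(1/((k:ℝ)+1)) * (‖y‖ * K) := by
        intro k
        set lam : ℝ := 1/((k:ℝ)+1) with hlamdef
        have hlam0 : 0 < lam := by positivity
        have hmn := hmono (xs k) y (w - lam • (xs k)) v (hxs k) hv
        have hid : w - lam • (xs k) - v = (w - v) - lam • (xs k) := by abel
        rw [hid, inner_sub_right, inner_smul_right, inner_sub_left, inner_sub_left] at hmn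
        have hexp : ⟪xs k, xs k⟫ = ‖xs k‖^2 := real_inner_self_eq_norm_sq _
        have hyx : ⟪y, xs k⟫ ≤ ‖y‖ * ‖xs k‖ := real_inner_le_norm _ _
        have hyx2 : ‖y‖ * ‖xs k‖ ≤ ‖y‖ * K := by
          apply mul_le_mul_of_nonneg_left (hKb k) (norm_nonneg _)
        nlinarith [sq_nonneg (‖xs k‖), hmn, hexp, hlam0, norm_nonneg (xs k)]
      have hL : Tendsto (fun k => ⟪xs k, w - v⟫ - ⟪y, w - v⟫) U
          (nhds (⟪xbar, w - v⟫ - ⟪y, w - v⟫)) := (hxw (w - v)).sub tendsto_const_nhds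
      have hR : Tendsto (fun k : ℕ => -(1/((k:ℝ)+1)) * (‖y‖ * K)) U (nhds 0) := by
        refine Tendsto.mono_left ?_ hUa
        have h1 : Tendsto (fun k : ℕ => 1/((k:ℝ)+1)) atTop (nhds 0) :=
          tendsto_one_div_add_atTop_nhds_zero_nat
        have := (h1.neg).mul_const (‖y‖ * K)
        simpa using this
      have hge : ⟪xbar, w - v⟫ - ⟪y, w - v⟫ ≥ 0 :=
        le_of_tendsto_of_tendsto hR hL (Filter.univ_mem' fun k => hseq k)
      rw [inner_sub_left]
      linarith [hge]
    exact Set.mem_iUnion.mpr ⟨xbar, hwin⟩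
  constructor
  · refine le_antisymm ?_ (interior_mono hMS)
    exact interior_maximal (subset_trans hint (subset_trans Set.Subset.rfl Set.Subset.rfl))
      isOpen_interior |>.trans (interior_mono Set.Subset.rfl)
  · refine le_antisymm (closure_minimal hcl isClosed_closure) (closure_mono hMS)

end Minty

set_option maxHeartbeats 1000000 in
/-- Brézis–Haraux-type theorem: if `A` and the `B i` are `3*` monotone and the composite
sum `M : x ↦ A x + Σᵢ Lᵢ*(Bᵢ(Lᵢ x))` is maximally monotone, then the interior (resp. the
closure) of `ran A + Σᵢ Lᵢ*(ran Bᵢ)` equals the interior (resp. the closure) of `ran M`. -/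
theorem brezis_haraux_composite_sum
    {H : Type*} [NormedAddCommGroup H] [InnerProductSpace ℝ H] [CompleteSpace H]
    {I : Type*} [Fintype I]
    (G : I → Type*) [∀ i, NormedAddCommGroup (G i)] [∀ i, InnerProductSpace ℝ (G i)]
    [∀ i, CompleteSpace (G i)]
    (A : H → Set H) (B : ∀ i, G i → Set (G i)) (L : ∀ i, H →L[ℝ] G i)
    (hAmono : ∀ x y u v : H, u ∈ A x → v ∈ A y → ⟪x - y, u - v⟫ ≥ 0)
    (hA3 : ∀ x u : H, (A x).Nonempty → u ∈ ⋃ z, A z →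
      BddAbove {r : ℝ | ∃ y v, v ∈ A y ∧ r = ⟪x - y, v - u⟫})
    (hBmono : ∀ i, ∀ x y u v : G i, u ∈ B i x → v ∈ B i y → ⟪x - y, u - v⟫ ≥ 0)
    (hB3 : ∀ i, ∀ x u : G i, (B i x).Nonempty → u ∈ ⋃ z, B i z →
      BddAbove {r : ℝ | ∃ y v, v ∈ B i y ∧ r = ⟪x - y, v - u⟫})
    (M : H → Set H)
    (hM : ∀ x, M x = A x + ∑ i, (ContinuousLinearMap.adjoint (L i)) '' (B i (L i x)))
    (hMmono : ∀ x y u v : H, u ∈ M x → v ∈ M y → ⟪x - y, u - v⟫ ≥ 0)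
    (hMmax : ∀ x u : H, (∀ y v : H, v ∈ M y → ⟪x - y, u - v⟫ ≥ 0) → u ∈ M x) :
    interior ((⋃ x, A x) + ∑ i, (ContinuousLinearMap.adjoint (L i)) '' (⋃ y, B i y))
      = interior (⋃ x, M x) ∧
    closure ((⋃ x, A x) + ∑ i, (ContinuousLinearMap.adjoint (L i)) '' (⋃ y, B i y))
      = closure (⋃ x, M x) := by
  classical
  rcases isEmpty_or_nonempty H with hemp | hne
  · have hAll : ∀ s t : Set H, s = t := by
      intro s t; ext x; exact (IsEmpty.false x).elim
    exact ⟨by rw [hAll ((⋃ x, A x) + ∑ i, (ContinuousLinearMap.adjoint (L i)) '' (⋃ y, B i y))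
        (⋃ x, M x)], by rw [hAll ((⋃ x, A x) + ∑ i,
        (ContinuousLinearMap.adjoint (L i)) '' (⋃ y, B i y)) (⋃ x, M x)]⟩
  -- a point in the graph of M
  obtain ⟨z₀, v₀, hz₀⟩ : ∃ z v : H, v ∈ M z := by
    by_contra h
    push_neg at h
    obtain ⟨x⟩ := hne
    exact h x x (hMmax x x fun y v hv => absurd hv (h y v))
  set Sset : Set H :=
    (⋃ x, A x) + ∑ i, (ContinuousLinearMap.adjoint (L i)) '' (⋃ y, B i y) with hSsetdef
  -- range of M is inside Sset
  have hMS : (⋃ x, M x) ⊆ Sset := by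
    intro v hv
    obtain ⟨y, hvy⟩ := Set.mem_iUnion.mp hv
    rw [hM y] at hvy
    refine Set.add_subset_add ?_ ?_ hvy
    · exact fun a ha => Set.mem_iUnion.mpr ⟨y, ha⟩
    · refine Set.finset_sum_subset_finset_sum Finset.univ _ _ fun i _ => ?_
      exact Set.image_mono fun b hb => Set.mem_iUnion.mpr ⟨L i y, hb⟩
  -- nonemptiness of the pieces at z₀
  have hz₀' := hz₀
  rw [hM z₀] at hz₀'
  rw [Set.mem_add] at hz₀'
  obtain ⟨a₀, ha₀, s₀, hs₀, -⟩ := hz₀'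
  have hAne : (A z₀).Nonempty := ⟨a₀, ha₀⟩
  have hBne : ∀ i, (B i (L i z₀)).Nonempty := by
    intro i
    rw [Set.mem_fintype_sum] at hs₀
    obtain ⟨gf, hgf, -⟩ := hs₀
    obtain ⟨bi, hbi, -⟩ := hgf i
    exact ⟨bi, hbi⟩
  -- the star bound
  have hstar : ∀ w ∈ Sset, ∃ C, ∀ y v, v ∈ M y → ⟪y - z₀, w - v⟫ ≤ C := by
    intro w hw
    rw [hSsetdef, Set.mem_add] at hw
    obtain ⟨a, ha, s, hs, has⟩ := hw
    rw [Set.mem_fintype_sum] at hs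
    obtain ⟨gf, hgf, hsum⟩ := hs
    have hbex : ∀ i, ∃ bi : G i, bi ∈ (⋃ y, B i y) ∧
        (ContinuousLinearMap.adjoint (L i)) bi = gf i := by
      intro i
      obtain ⟨bi, hbi, hbieq⟩ := hgf i
      exact ⟨bi, hbi, hbieq⟩
    choose b hb1 hb2 using hbex
    obtain ⟨CA, hCA⟩ := hA3 z₀ a hAne ha
    rw [mem_upperBounds] at hCA
    have hCBex : ∀ i, ∃ CB : ℝ, ∀ r ∈
        {r : ℝ | ∃ y v, v ∈ B i y ∧ r = ⟪L i z₀ - y, v - b i⟫}, r ≤ CB := by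
      intro i
      obtain ⟨CB, hCB⟩ := hB3 i (L i z₀) (b i) (hBne i) (hb1 i)
      rw [mem_upperBounds] at hCB
      exact ⟨CB, hCB⟩
    choose CB hCB using hCBex
    refine ⟨CA + ∑ i, CB i, ?_⟩
    intro y v hv
    rw [hM y, Set.mem_add] at hv
    obtain ⟨p, hp, s', hs', hvs⟩ := hv
    rw [Set.mem_fintype_sum] at hs'
    obtain ⟨gf', hgf', hsum'⟩ := hs'
    have hqex : ∀ i, ∃ qi : G i, qi ∈ B i (L i y) ∧
        (ContinuousLinearMap.adjoint (L i)) qi = gf' i := by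
      intro i
      obtain ⟨qi, hqi, hqieq⟩ := hgf' i
      exact ⟨qi, hqi, hqieq⟩
    choose q hq1 hq2 using hqex
    -- decompose w - v
    have hwv : w - v = (a - p) + ∑ i, (ContinuousLinearMap.adjoint (L i)) (b i - q i) := by
      have h1 : w = a + ∑ i, (ContinuousLinearMap.adjoint (L i)) (b i) := by
        rw [← has, ← hsum]
        congr 1
        exact Finset.sum_congr rfl fun i _ => (hb2 i).symm
      have h2 : v = p + ∑ i, (ContinuousLinearMap.adjoint (L i)) (q i) := by
        rw [← hvs, ← hsum']
        congr 1
        exact Finset.sum_congr rfl fun i _ => (hq2 i).symm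
      rw [h1, h2]
      rw [show ∀ x1 x2 y1 y2 : H, (x1 + y1) - (x2 + y2) = (x1 - x2) + (y1 - y2) from
        fun _ _ _ _ => by abel]
      congr 1
      rw [← Finset.sum_sub_distrib]
      exact Finset.sum_congr rfl fun i _ => (map_sub _ _ _).symm
    rw [hwv, inner_add_right, inner_sum]
    have hterm1 : ⟪y - z₀, a - p⟫ ≤ CA := by
      have hm : ⟪z₀ - y, p - a⟫ ∈ {r : ℝ | ∃ y v, v ∈ A y ∧ r = ⟪z₀ - y, v - a⟫} :=
        ⟨y, p, hp, rfl⟩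
      have h3 := hCA _ hm
      have h4 : ⟪y - z₀, a - p⟫ = ⟪z₀ - y, p - a⟫ := by
        rw [show y - z₀ = -(z₀ - y) from by abel, show a - p = -(p - a) from by abel,
          inner_neg_neg]
      linarith [h4 ▸ h3, h3, h4]
    have hterm2 : ∀ i ∈ Finset.univ,
        ⟪y - z₀, (ContinuousLinearMap.adjoint (L i)) (b i - q i)⟫ ≤ CB i := by
      intro i _
      rw [ContinuousLinearMap.adjoint_inner_right]
      have hm : ⟪L i z₀ - L i y, q i - b i⟫ ∈
          {r : ℝ | ∃ y v, v ∈ B i y ∧ r = ⟪L i z₀ - y, v - b i⟫} :=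
        ⟨L i y, q i, hq1 i, rfl⟩
      have h3 := hCB i _ hm
      have h4 : ⟪(L i) (y - z₀), b i - q i⟫ = ⟪L i z₀ - L i y, q i - b i⟫ := by
        rw [map_sub, show (L i) y - (L i) z₀ = -((L i) z₀ - (L i) y) from by abel,
          show b i - q i = -(q i - b i) from by abel, inner_neg_neg]
      linarith [h3, h4]
    have hsumle : ∑ i, ⟪y - z₀, (ContinuousLinearMap.adjoint (L i)) (b i - q i)⟫
        ≤ ∑ i, CB i := Finset.sum_le_sum hterm2
    linarith [hterm1, hsumle]
  exact brezis_haraux_core M hMmono hMmax z₀ v₀ hz₀ Sset hMS hstar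
end

section
/- Suppose there exists x̄ ∈ C such that F_i(L_i x̄) = p_i for every i ∈ I. Then for every x ∈ H the following are equivalent: (a) x ∈ C and, for every y ∈ C, Σ_{i∈I} ω_i ⟪L_i(y − x), F_i(L_i x) − p_i⟫ ≥ 0; (b) x ∈ C and F_i(L_i x) = p_i for every i ∈ I. In other words, the solution set of the relaxed variational inequality problem coincides with the solution set of the exact problem whenever the latter is nonempty. -/
open RealInnerProductSpace Pointwise

/-- If the exact problem has a solution, the solution set of the relaxed variational
inequality coincides with that of the exact problem. -/
theorem relaxed_eq_exact_of_consistent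
    {H : Type*} [NormedAddCommGroup H] [InnerProductSpace ℝ H] [CompleteSpace H]
    {I : Type*} [Fintype I] [Nonempty I]
    (G : I → Type*) [∀ i, NormedAddCommGroup (G i)] [∀ i, InnerProductSpace ℝ (G i)]
    [∀ i, CompleteSpace (G i)]
    (ω : I → ℝ) (hω : ∀ i, ω i ∈ Set.Ioo (0 : ℝ) 1) (hωsum : ∑ i, ω i = 1)
    (C : Set H) (hCne : C.Nonempty) (hCcl : IsClosed C) (hCcv : Convex ℝ C)
    (p : ∀ i, G i) (L : ∀ i, H →L[ℝ] G i) (hL : ∀ i, L i ≠ 0)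
    (F : ∀ i, G i → G i)
    (hF : ∀ i, ∀ u v : G i, ⟪u - v, F i u - F i v⟫ ≥ ‖F i u - F i v‖ ^ 2)
    (xbar : H) (hxbar : xbar ∈ C) (hxbareq : ∀ i, F i (L i xbar) = p i) :
    ∀ x : H,
      (x ∈ C ∧ ∀ y ∈ C, (∑ i, ω i * ⟪L i (y - x), F i (L i x) - p i⟫) ≥ 0) ↔
      (x ∈ C ∧ ∀ i, F i (L i x) = p i) := by
  intro x
  constructor
  · rintro ⟨hxC, hvi⟩
    refine ⟨hxC, ?_⟩
    have h1 := hvi xbar hxbar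
    -- each term ≤ - ω i * ‖F i (L i x) - p i‖²
    have hterm : ∀ i, ω i * ⟪L i (xbar - x), F i (L i x) - p i⟫ ≤
        -(ω i * ‖F i (L i x) - p i‖ ^ 2) := by
      intro i
      have hfi := hF i (L i x) (L i xbar)
      rw [hxbareq i] at hfi
      have hin : ⟪L i (xbar - x), F i (L i x) - p i⟫ ≤ -‖F i (L i x) - p i‖ ^ 2 := by
        have : L i (xbar - x) = -(L i x - L i xbar) := by
          rw [map_sub]; abel
        rw [this, inner_neg_left]
        have : ⟪L i x - L i xbar, F i (L i x) - p i⟫ ≥ ‖F i (L i x) - p i‖ ^ 2 := hfi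
        linarith
      have hωpos : 0 < ω i := (hω i).1
      nlinarith
    have hsum : ∑ i, ω i * ⟪L i (xbar - x), F i (L i x) - p i⟫ ≤
        ∑ i, -(ω i * ‖F i (L i x) - p i‖ ^ 2) :=
      Finset.sum_le_sum fun i _ => hterm i
    have hsum2 : ∑ i, ω i * ‖F i (L i x) - p i‖ ^ 2 ≤ 0 := by
      rw [Finset.sum_neg_distrib] at hsum
      linarith
    have hzero : ∀ i ∈ Finset.univ, ω i * ‖F i (L i x) - p i‖ ^ 2 = 0 := by
      have hnn : ∀ i ∈ Finset.univ, (0:ℝ) ≤ ω i * ‖F i (L i x) - p i‖ ^ 2 := fun i _ =>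
        mul_nonneg (hω i).1.le (sq_nonneg _)
      intro i hi
      have := (Finset.sum_eq_zero_iff_of_nonneg hnn).mp
        (le_antisymm hsum2 (Finset.sum_nonneg hnn))
      exact this i hi
    intro i
    have := hzero i (Finset.mem_univ i)
    have hωpos : 0 < ω i := (hω i).1
    have : ‖F i (L i x) - p i‖ ^ 2 = 0 := by
      rcases mul_eq_zero.mp this with h | h
      · exact absurd h hωpos.ne'
      · exact h
    have : F i (L i x) - p i = 0 := by
      simpa using (pow_eq_zero_iff (n := 2) (by norm_num)).mp this
    exact sub_eq_zero.mp this
  · rintro ⟨hxC, heq⟩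
    refine ⟨hxC, fun y _ => ?_⟩
    have : ∀ i, ω i * ⟪L i (y - x), F i (L i x) - p i⟫ = 0 := by
      intro i
      rw [heq i, sub_self, inner_zero_right, mul_zero]
    rw [Finset.sum_congr rfl fun i _ => this i]
    simp
end

section
/- Let x̄₁ and x̄₂ both be solutions to the relaxed problem, i.e., x̄₁, x̄₂ ∈ C and, for every y ∈ C and each k ∈ {1,2}, Σ_{i∈I} ω_i ⟪L_i(y − x̄_k), F_i(L_i x̄_k) − p_i⟫ ≥ 0. Then for every i ∈ I, F_i(L_i x̄₁) = F_i(L_i x̄₂); that is, the values (F_i(L_i x̄))_{i∈I} are the same for every solution x̄ of the relaxed problem. -/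
open RealInnerProductSpace Pointwise

/-- Any two solutions of the relaxed variational inequality problem give the same values
`F i (L i xbar)` for every `i`. -/
theorem relaxed_solutions_same_values
    {H : Type*} [NormedAddCommGroup H] [InnerProductSpace ℝ H] [CompleteSpace H]
    {I : Type*} [Fintype I] [Nonempty I]
    (G : I → Type*) [∀ i, NormedAddCommGroup (G i)] [∀ i, InnerProductSpace ℝ (G i)]
    [∀ i, CompleteSpace (G i)]
    (ω : I → ℝ) (hω : ∀ i, ω i ∈ Set.Ioo (0 : ℝ) 1) (hωsum : ∑ i, ω i = 1)
    (C : Set H) (hCne : C.Nonempty) (hCcl : IsClosed C) (hCcv : Convex ℝ C)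
    (p : ∀ i, G i) (L : ∀ i, H →L[ℝ] G i) (hL : ∀ i, L i ≠ 0)
    (F : ∀ i, G i → G i)
    (hF : ∀ i, ∀ u v : G i, ⟪u - v, F i u - F i v⟫ ≥ ‖F i u - F i v‖ ^ 2)
    (xbar1 xbar2 : H) (h₁ : xbar1 ∈ C) (h₂ : xbar2 ∈ C)
    (hsol₁ : ∀ y ∈ C, (∑ i, ω i * ⟪L i (y - xbar1), F i (L i xbar1) - p i⟫) ≥ 0)
    (hsol₂ : ∀ y ∈ C, (∑ i, ω i * ⟪L i (y - xbar2), F i (L i xbar2) - p i⟫) ≥ 0) :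
    ∀ i, F i (L i xbar1) = F i (L i xbar2) := by
  have hA := hsol₁ xbar2 h₂
  have hB := hsol₂ xbar1 h₁
  -- The combined sum
  set S := fun i => ω i * ⟪L i xbar1 - L i xbar2, F i (L i xbar1) - F i (L i xbar2)⟫ with hS
  have hsum_le : (∑ i, S i) ≤ 0 := by
    have h : (∑ i, S i) = -((∑ i, ω i * ⟪L i (xbar2 - xbar1), F i (L i xbar1) - p i⟫)
        + (∑ i, ω i * ⟪L i (xbar1 - xbar2), F i (L i xbar2) - p i⟫)) := by
      rw [← Finset.sum_add_distrib, ← Finset.sum_neg_distrib]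
      refine Finset.sum_congr rfl fun i _ => ?_
      simp only [hS, map_sub, inner_sub_left, inner_sub_right]
      ring
    rw [h]
    linarith
  have hterm : ∀ i, ω i * ‖F i (L i xbar1) - F i (L i xbar2)‖ ^ 2 ≤ S i := by
    intro i
    have := hF i (L i xbar1) (L i xbar2)
    exact mul_le_mul_of_nonneg_left this (le_of_lt (hω i).1)
  have hnonneg : ∀ i ∈ Finset.univ, (0 : ℝ) ≤ S i := by
    intro i _
    exact le_trans (mul_nonneg (hω i).1.le (sq_nonneg _)) (hterm i)
  have hzero : ∀ i ∈ Finset.univ, S i = 0 :=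
    (Finset.sum_eq_zero_iff_of_nonneg hnonneg).mp
      (le_antisymm hsum_le (Finset.sum_nonneg hnonneg))
  intro i
  have h0 : ω i * ‖F i (L i xbar1) - F i (L i xbar2)‖ ^ 2 ≤ 0 := by
    rw [← hzero i (Finset.mem_univ i)]; exact hterm i
  have hsq : ‖F i (L i xbar1) - F i (L i xbar2)‖ ^ 2 ≤ 0 := by
    nlinarith [(hω i).1]
  have hn : ‖F i (L i xbar1) - F i (L i xbar2)‖ ^ 2 = 0 :=
    le_antisymm hsq (sq_nonneg _)
  exact sub_eq_zero.mp (norm_eq_zero.mp (pow_eq_zero_iff two_ne_zero |>.mp hn))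
end

section
/- If C is bounded, then the relaxed problem has a solution: there exists x ∈ C such that Σ_{i∈I} ω_i ⟪L_i(y − x), F_i(L_i x) − p_i⟫ ≥ 0 for every y ∈ C. -/
open RealInnerProductSpace Pointwise

section AuxLemmas

variable {E : Type*} [NormedAddCommGroup E] [InnerProductSpace ℝ E] [CompleteSpace E]

/-- Metric projection onto a nonempty closed convex set: existence + variational inequality. -/
lemma exists_proj_aux {C : Set E} (hne : C.Nonempty) (hcl : IsClosed C) (hcv : Convex ℝ C)
    (u : E) : ∃ z ∈ C, ∀ w ∈ C, ⟪u - z, w - z⟫ ≤ 0 := by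
  obtain ⟨v, hv, hveq⟩ := exists_norm_eq_iInf_of_complete_convex hne hcl.isComplete hcv u
  exact ⟨v, hv, fun w hw => (norm_eq_iInf_iff_real_inner_le_zero hcv hv).1 hveq w hw⟩

/-- Strongly monotone Lipschitz VI on a nonempty closed convex set has a solution. -/
lemma vi_strong_aux {C : Set E} (hne : C.Nonempty) (hcl : IsClosed C) (hcv : Convex ℝ C)
    (B : E → E) (ε Λ : ℝ) (hε : 0 < ε) (hεΛ : ε ≤ Λ)
    (hLip : ∀ x y, ‖B x - B y‖ ≤ Λ * ‖x - y‖)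
    (hmono : ∀ x y, ε * ‖x - y‖ ^ 2 ≤ ⟪x - y, B x - B y⟫) :
    ∃ x ∈ C, ∀ w ∈ C, 0 ≤ ⟪w - x, B x⟫ := by
  have hΛ : 0 < Λ := lt_of_lt_of_le hε hεΛ
  obtain ⟨γ, hγdef⟩ : ∃ g : ℝ, g = ε / Λ ^ 2 := ⟨_, rfl⟩
  have hγ : 0 < γ := by rw [hγdef]; positivity
  have hA : γ * Λ ^ 2 = ε := by rw [hγdef]; field_simp
  have hεsq : ε ^ 2 ≤ Λ ^ 2 := by nlinarith
  have hγε1 : γ * ε ≤ 1 := by nlinarith [mul_pos hΛ hΛ]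
  have hγεpos : 0 < γ * ε := mul_pos hγ hε
  obtain ⟨c2, hc2eq⟩ : ∃ c : ℝ, c = 1 - γ * ε := ⟨_, rfl⟩
  have hc2nonneg : 0 ≤ c2 := by linarith
  have hc2lt : c2 < 1 := by linarith
  obtain ⟨c, hcdef⟩ : ∃ c : ℝ, c = Real.sqrt c2 := ⟨_, rfl⟩
  have hcnonneg : 0 ≤ c := hcdef ▸ Real.sqrt_nonneg _
  have hcsq : c ^ 2 = c2 := by rw [hcdef, Real.sq_sqrt hc2nonneg]
  have hclt : c < 1 := by
    rw [hcdef]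
    have := Real.sqrt_lt_sqrt hc2nonneg hc2lt
    simpa using this
  -- the projection
  choose P hPmem hPle using exists_proj_aux hne hcl hcv
  have hPnonexp : ∀ u v, ‖P u - P v‖ ≤ ‖u - v‖ := by
    intro u v
    have h1 := hPle u (P v) (hPmem v)
    have h2 := hPle v (P u) (hPmem u)
    have e1 : 0 ≤ ⟪u - P u, P u - P v⟫ := by
      rw [show P u - P v = -(P v - P u) by abel, inner_neg_right]; linarith
    have key : ‖P u - P v‖ ^ 2 ≤ ⟪u - v, P u - P v⟫ := by
      have expand : ⟪u - v, P u - P v⟫ =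
          ⟪u - P u, P u - P v⟫ - ⟪v - P v, P u - P v⟫ + ⟪P u - P v, P u - P v⟫ := by
        rw [show u - v = (u - P u) - (v - P v) + (P u - P v) from by abel,
          inner_add_left, inner_sub_left]
      rw [expand, real_inner_self_eq_norm_sq]
      linarith
    have hcs : ⟪u - v, P u - P v⟫ ≤ ‖u - v‖ * ‖P u - P v‖ := real_inner_le_norm _ _
    nlinarith [norm_nonneg (P u - P v), norm_nonneg (u - v)]
  -- the displacement map is a c-contraction
  have hdisp : ∀ x y, ‖(x - γ • B x) - (y - γ • B y)‖ ≤ c * ‖x - y‖ := by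
    intro x y
    have hrw : (x - γ • B x) - (y - γ • B y) = (x - y) - γ • (B x - B y) := by
      rw [smul_sub]; abel
    have h1 : ε * ‖x - y‖ ^ 2 ≤ ⟪x - y, B x - B y⟫ := hmono x y
    have h2 : ‖B x - B y‖ ≤ Λ * ‖x - y‖ := hLip x y
    have hB0 : 0 ≤ ‖B x - B y‖ := norm_nonneg _
    have ha0 : 0 ≤ ‖x - y‖ := norm_nonneg _
    have p1 : (‖γ‖ * ‖B x - B y‖) ^ 2 ≤ γ * ε * ‖x - y‖ ^ 2 := by
      have hn : ‖γ‖ = γ := by rw [Real.norm_eq_abs, abs_of_pos hγ]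
      have hd2 : ‖B x - B y‖ ^ 2 ≤ Λ ^ 2 * ‖x - y‖ ^ 2 := by nlinarith
      calc (‖γ‖ * ‖B x - B y‖) ^ 2 = γ ^ 2 * ‖B x - B y‖ ^ 2 := by rw [hn]; ring
        _ ≤ γ ^ 2 * (Λ ^ 2 * ‖x - y‖ ^ 2) := by
            exact mul_le_mul_of_nonneg_left hd2 (sq_nonneg γ)
        _ = γ * (γ * Λ ^ 2) * ‖x - y‖ ^ 2 := by ring
        _ = γ * ε * ‖x - y‖ ^ 2 := by rw [hA]
    have p2 : 2 * γ * (ε * ‖x - y‖ ^ 2) ≤ 2 * γ * ⟪x - y, B x - B y⟫ :=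
      mul_le_mul_of_nonneg_left h1 (by positivity)
    have hc2mul : c2 * ‖x - y‖ ^ 2 = ‖x - y‖ ^ 2 - γ * ε * ‖x - y‖ ^ 2 := by
      rw [hc2eq]; ring
    have hsq : ‖(x - γ • B x) - (y - γ • B y)‖ ^ 2 ≤ c2 * ‖x - y‖ ^ 2 := by
      rw [hrw, norm_sub_sq_real, real_inner_smul_right, norm_smul]
      nlinarith [p1, p2, hc2mul]
    have h3 : ‖(x - γ • B x) - (y - γ • B y)‖ ^ 2 ≤ (c * ‖x - y‖) ^ 2 := by
      have : (c * ‖x - y‖) ^ 2 = c2 * ‖x - y‖ ^ 2 := by rw [mul_pow, hcsq]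
      linarith
    have h4 := Real.sqrt_le_sqrt h3
    rwa [Real.sqrt_sq (norm_nonneg _), Real.sqrt_sq (by positivity)] at h4
  -- Banach fixed point
  obtain ⟨x0, hx0⟩ := hne
  set T : E → E := fun x => P (x - γ • B x) with hTdef
  have hTmaps : Set.MapsTo T C C := fun x _ => hPmem _
  have hTlip : LipschitzWith c.toNNReal T := by
    apply LipschitzWith.of_dist_le_mul
    intro x y
    rw [dist_eq_norm, dist_eq_norm, Real.coe_toNNReal c hcnonneg]
    exact le_trans (hPnonexp _ _) (hdisp x y)
  have hcontr : ContractingWith c.toNNReal (hTmaps.restrict T C C) := by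
    constructor
    · exact_mod_cast (Real.coe_toNNReal c hcnonneg) ▸ hclt
    · exact ((hTlip.lipschitzOnWith (s := C)).mapsToRestrict hTmaps)
  obtain ⟨x, hxC, hfix, -⟩ :=
    ContractingWith.exists_fixedPoint' hcl.isComplete hTmaps hcontr hx0 (edist_ne_top _ _)
  refine ⟨x, hxC, fun w hw => ?_⟩
  have hvi := hPle (x - γ • B x) w hw
  have hfix' : P (x - γ • B x) = x := hfix
  rw [hfix'] at hvi
  have : ⟪x - γ • B x - x, w - x⟫ = -γ * ⟪B x, w - x⟫ := by
    rw [show x - γ • B x - x = -(γ • B x) from by abel, inner_neg_left, real_inner_smul_left]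
    ring
  rw [this] at hvi
  have hBwx : 0 ≤ ⟪B x, w - x⟫ := by nlinarith
  rw [real_inner_comm]; exact hBwx


/-- Finite intersection property for half-spaces on a bounded closed convex set,
via Banach–Alaoglu. -/
lemma fip_halfspaces_aux {C : Set E} (hcl : IsClosed C) (hcv : Convex ℝ C)
    (hbd : Bornology.IsBounded C) {ι : Type*} (a : ι → E) (b : ι → ℝ)
    (hfin : ∀ t : Finset ι, ∃ x ∈ C, ∀ i ∈ t, ⟪a i, x⟫ ≤ b i) :
    ∃ x ∈ C, ∀ i, ⟪a i, x⟫ ≤ b i := by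
  obtain ⟨x₁, hx₁, -⟩ := hfin ∅
  have hne : C.Nonempty := ⟨x₁, hx₁⟩
  classical
  set Φ : E → WeakDual ℝ E :=
    fun x => StrongDual.toWeakDual (InnerProductSpace.toDual ℝ E x) with hΦdef
  have hΦapp : ∀ x v, Φ x v = ⟪x, v⟫ := fun x v => rfl
  set D : Set (WeakDual ℝ E) := Φ '' C with hDdef
  -- D is bounded (as a set of the normed dual)
  have hDbdd : Bornology.IsBounded (StrongDual.toWeakDual ⁻¹' D) := by
    have himg : StrongDual.toWeakDual ⁻¹' D = (InnerProductSpace.toDual ℝ E) '' C := by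
      ext φ
      simp only [hDdef, Set.mem_preimage, Set.mem_image, hΦdef]
      constructor
      · rintro ⟨x, hx, hxe⟩
        exact ⟨x, hx, StrongDual.toWeakDual.injective hxe⟩
      · rintro ⟨x, hx, rfl⟩
        exact ⟨x, hx, rfl⟩
    rw [himg]
    exact ((InnerProductSpace.toDual ℝ E).toLinearIsometry.lipschitz).isBounded_image hbd
  -- D is weak-* closed (separation via the metric projection)
  have hDcl : IsClosed D := by
    rw [← isOpen_compl_iff]
    rw [isOpen_iff_forall_mem_open]
    intro φ₀ hφ₀
    set x₀ : E := (InnerProductSpace.toDual ℝ E).symm (WeakDual.toStrongDual φ₀) with hx₀def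
    have hx₀app : ∀ v, φ₀ v = ⟪x₀, v⟫ := by
      intro v
      exact (InnerProductSpace.toDual_symm_apply
        (y := WeakDual.toStrongDual φ₀) (x := v)).symm
    have hx₀nC : x₀ ∉ C := by
      intro hmem
      apply hφ₀
      refine ⟨x₀, hmem, ?_⟩
      refine DFunLike.ext _ _ fun v => ?_
      rw [hΦapp, ← hx₀app]
    obtain ⟨z, hzC, hz⟩ := exists_proj_aux hne hcl hcv x₀
    set v : E := x₀ - z with hvdef
    have hvne : v ≠ 0 := by
      intro h
      apply hx₀nC
      have : x₀ = z := by rwa [hvdef, sub_eq_zero] at h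
      rw [this]; exact hzC
    refine ⟨(fun φ : WeakDual ℝ E => φ v) ⁻¹' Set.Ioi ⟪v, z⟫, ?_, ?_, ?_⟩
    · intro φ hφ
      simp only [Set.mem_preimage, Set.mem_Ioi] at hφ
      simp only [Set.mem_compl_iff]
      rintro ⟨x, hxC, rfl⟩
      have h1 : ⟪v, x - z⟫ ≤ 0 := hz x hxC
      have h2 : ⟪v, x⟫ ≤ ⟪v, z⟫ := by
        rw [inner_sub_right] at h1
        linarith
      rw [hΦapp] at hφ
      linarith [real_inner_comm x v]
    · exact (WeakDual.eval_continuous v).isOpen_preimage _ isOpen_Ioi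
    · simp only [Set.mem_preimage, Set.mem_Ioi]
      rw [hx₀app]
      have hsub : ⟪v, x₀⟫ - ⟪v, z⟫ = ‖v‖ ^ 2 := by
        rw [← inner_sub_right, ← hvdef, real_inner_self_eq_norm_sq]
      have hv2 : 0 < ‖v‖ ^ 2 := pow_pos (norm_pos_iff.2 hvne) 2
      linarith [real_inner_comm x₀ v]
  have hDcpt : IsCompact D := WeakDual.isCompact_of_bounded_of_closed hDbdd hDcl
  set Z : ι → Set (WeakDual ℝ E) := fun i => (fun φ : WeakDual ℝ E => φ (a i)) ⁻¹' Set.Iic (b i)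
    with hZdef
  have hZcl : ∀ i, IsClosed (Z i) := fun i =>
    (IsClosed.preimage (WeakDual.eval_continuous (a i)) isClosed_Iic)
  have hnonempty : (D ∩ ⋂ i, Z i).Nonempty := by
    by_contra hempty
    rw [Set.not_nonempty_iff_eq_empty] at hempty
    obtain ⟨t, ht⟩ := hDcpt.elim_finite_subfamily_closed Z hZcl hempty
    obtain ⟨x, hxC, hx⟩ := hfin t
    have : Φ x ∈ D ∩ ⋂ i ∈ t, Z i := by
      refine ⟨⟨x, hxC, rfl⟩, ?_⟩
      simp only [Set.mem_iInter, hZdef, Set.mem_preimage, Set.mem_Iic]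
      intro i hi
      rw [hΦapp, real_inner_comm]
      exact hx i hi
    rw [ht] at this
    exact this
  obtain ⟨φ, ⟨x, hxC, rfl⟩, hφZ⟩ := hnonempty
  refine ⟨x, hxC, fun i => ?_⟩
  have := Set.mem_iInter.1 hφZ i
  simp only [hZdef, Set.mem_preimage, Set.mem_Iic] at this
  rw [hΦapp, real_inner_comm] at this
  exact this

end AuxLemmas

/-- If `C` is bounded, the relaxed variational inequality problem has a solution. -/
theorem relaxed_has_solution_of_bounded
    {H : Type*} [NormedAddCommGroup H] [InnerProductSpace ℝ H] [CompleteSpace H]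
    {I : Type*} [Fintype I] [Nonempty I]
    (G : I → Type*) [∀ i, NormedAddCommGroup (G i)] [∀ i, InnerProductSpace ℝ (G i)]
    [∀ i, CompleteSpace (G i)]
    (ω : I → ℝ) (hω : ∀ i, ω i ∈ Set.Ioo (0 : ℝ) 1) (hωsum : ∑ i, ω i = 1)
    (C : Set H) (hCne : C.Nonempty) (hCcl : IsClosed C) (hCcv : Convex ℝ C)
    (p : ∀ i, G i) (L : ∀ i, H →L[ℝ] G i) (hL : ∀ i, L i ≠ 0)
    (F : ∀ i, G i → G i)
    (hF : ∀ i, ∀ u v : G i, ⟪u - v, F i u - F i v⟫ ≥ ‖F i u - F i v‖ ^ 2)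
    (hCbdd : Bornology.IsBounded C) :
    ∃ x ∈ C, ∀ y ∈ C, (∑ i, ω i * ⟪L i (y - x), F i (L i x) - p i⟫) ≥ 0 := by
  classical
  set A : H → H :=
    fun x => ∑ i, ω i • (ContinuousLinearMap.adjoint (L i)) (F i (L i x) - p i) with hAdef
  have hAdj : ∀ x y : H, ⟪y, A x⟫ = ∑ i, ω i * ⟪L i y, F i (L i x) - p i⟫ := by
    intro x y
    simp only [hAdef, inner_sum]
    refine Finset.sum_congr rfl fun i _ => ?_
    rw [real_inner_smul_right, ContinuousLinearMap.adjoint_inner_right]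
  have hωpos : ∀ i, 0 < ω i := fun i => (hω i).1
  have hFne : ∀ i (u v : G i), ‖F i u - F i v‖ ≤ ‖u - v‖ := by
    intro i u v
    have h1 := hF i u v
    have h2 : ⟪u - v, F i u - F i v⟫ ≤ ‖u - v‖ * ‖F i u - F i v‖ := real_inner_le_norm _ _
    rcases eq_or_lt_of_le (norm_nonneg (F i u - F i v)) with h | h
    · rw [← h]; exact norm_nonneg _
    · nlinarith
  have hmonoA : ∀ x y : H, ⟪x - y, A y⟫ ≤ ⟪x - y, A x⟫ := by
    intro x y
    rw [hAdj, hAdj]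
    refine Finset.sum_le_sum fun i _ => ?_
    have key : ⟪L i (x - y), F i (L i x) - p i⟫ - ⟪L i (x - y), F i (L i y) - p i⟫
        = ⟪L i x - L i y, F i (L i x) - F i (L i y)⟫ := by
      rw [← inner_sub_right, map_sub]
      congr 1
      abel
    have h1 := hF i (L i x) (L i y)
    have h2 : (0:ℝ) ≤ ‖F i (L i x) - F i (L i y)‖ ^ 2 := sq_nonneg _
    have h3 : ⟪L i (x - y), F i (L i y) - p i⟫ ≤ ⟪L i (x - y), F i (L i x) - p i⟫ := by
      nlinarith [key]
    exact mul_le_mul_of_nonneg_left h3 (hωpos i).le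
  set K : ℝ := ∑ i, ω i * ‖L i‖ ^ 2 with hKdef
  have hK0 : 0 ≤ K := Finset.sum_nonneg fun i _ => mul_nonneg (hωpos i).le (sq_nonneg _)
  have hALip : ∀ x y : H, ‖A x - A y‖ ≤ K * ‖x - y‖ := by
    intro x y
    have hAxy : A x - A y =
        ∑ i, ω i • (ContinuousLinearMap.adjoint (L i)) (F i (L i x) - F i (L i y)) := by
      simp only [hAdef]
      rw [← Finset.sum_sub_distrib]
      refine Finset.sum_congr rfl fun i _ => ?_
      rw [← smul_sub, ← map_sub]
      congr 2
      abel
    rw [hAxy]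
    refine le_trans (norm_sum_le _ _) ?_
    rw [hKdef, Finset.sum_mul]
    refine Finset.sum_le_sum fun i _ => ?_
    rw [norm_smul, Real.norm_eq_abs, abs_of_pos (hωpos i)]
    have hadj : ‖(ContinuousLinearMap.adjoint (L i)) (F i (L i x) - F i (L i y))‖
        ≤ ‖L i‖ * ‖F i (L i x) - F i (L i y)‖ := by
      have h1 := (ContinuousLinearMap.adjoint (L i)).le_opNorm (F i (L i x) - F i (L i y))
      have h2 : ‖ContinuousLinearMap.adjoint (L i)‖ = ‖L i‖ :=
        ContinuousLinearMap.adjoint.norm_map (L i)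
      rw [h2] at h1
      exact h1
    have hFle : ‖F i (L i x) - F i (L i y)‖ ≤ ‖L i‖ * ‖x - y‖ := by
      refine le_trans (hFne i _ _) ?_
      rw [← map_sub]
      exact (L i).le_opNorm _
    calc ω i * ‖(ContinuousLinearMap.adjoint (L i)) (F i (L i x) - F i (L i y))‖
        ≤ ω i * (‖L i‖ * (‖L i‖ * ‖x - y‖)) := by
          refine mul_le_mul_of_nonneg_left ?_ (hωpos i).le
          exact le_trans hadj (mul_le_mul_of_nonneg_left hFle (norm_nonneg _))
      _ = ω i * ‖L i‖ ^ 2 * ‖x - y‖ := by ring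
  obtain ⟨R, hR⟩ := (Metric.isBounded_iff_subset_closedBall 0).1 hCbdd
  obtain ⟨xc, hxc⟩ := hCne
  have hR0 : 0 ≤ R := le_trans (norm_nonneg xc)
    (by simpa [Metric.mem_closedBall, dist_zero_right] using hR hxc)
  have hnorm_le : ∀ w ∈ C, ‖w‖ ≤ R := by
    intro w hw
    simpa [Metric.mem_closedBall, dist_zero_right] using hR hw
  -- apply the FIP lemma
  have key : ∃ x ∈ C, ∀ q : ↥C × ℕ,
      ⟪A (q.1 : H), x⟫ ≤ ⟪A (q.1 : H), (q.1 : H)⟫ + 1 / ((q.2 : ℝ) + 1) := by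
    apply fip_halfspaces_aux hCcl hCcv hCbdd
      (fun q : ↥C × ℕ => A (q.1 : H))
      (fun q : ↥C × ℕ => ⟪A (q.1 : H), (q.1 : H)⟫ + 1 / ((q.2 : ℝ) + 1))
    intro t
    set N : ℕ := t.sup (fun q => q.2) with hNdef
    set ε : ℝ := 1 / (((N : ℝ) + 1) * (2 * R ^ 2 + 1)) with hεdef
    have hεpos : 0 < ε := by rw [hεdef]; positivity
    set B : H → H := fun x => A x + ε • x with hBdef
    have hBsub : ∀ x y : H, B x - B y = (A x - A y) + ε • (x - y) := by
      intro x y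
      simp only [hBdef, smul_sub]
      abel
    have hBLip : ∀ x y, ‖B x - B y‖ ≤ (K + ε) * ‖x - y‖ := by
      intro x y
      rw [hBsub]
      refine le_trans (norm_add_le _ _) ?_
      rw [norm_smul, Real.norm_eq_abs, abs_of_pos hεpos]
      have := hALip x y
      nlinarith
    have hBmono : ∀ x y, ε * ‖x - y‖ ^ 2 ≤ ⟪x - y, B x - B y⟫ := by
      intro x y
      rw [hBsub, inner_add_right, real_inner_smul_right, real_inner_self_eq_norm_sq,
        inner_sub_right]
      linarith [hmonoA x y]
    obtain ⟨x, hxC, hx⟩ := vi_strong_aux ⟨xc, hxc⟩ hCcl hCcv B ε (K + ε) hεpos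
      (by linarith) hBLip hBmono
    refine ⟨x, hxC, ?_⟩
    rintro ⟨y, n⟩ hq
    simp only
    have hyC : (y : H) ∈ C := y.2
    have h0 : 0 ≤ ⟪(y : H) - x, B x⟫ := hx _ hyC
    rw [hBdef] at h0
    simp only at h0
    rw [inner_add_right, real_inner_smul_right] at h0
    have hmono' := hmonoA (y : H) x
    have hin : ⟪(y : H) - x, x⟫ ≤ 2 * R ^ 2 := by
      have h1 : ⟪(y : H) - x, x⟫ ≤ ‖(y : H) - x‖ * ‖x‖ := real_inner_le_norm _ _
      have hy := hnorm_le _ hyC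
      have hx' := hnorm_le _ hxC
      have h2 : ‖(y : H) - x‖ ≤ 2 * R := le_trans (norm_sub_le _ _) (by linarith)
      nlinarith [norm_nonneg x, norm_nonneg ((y : H) - x)]
    have hn : (n : ℝ) ≤ (N : ℝ) := by
      exact_mod_cast Finset.le_sup (f := fun q : ↥C × ℕ => q.2) hq
    have hεsmall : ε * (2 * R ^ 2) ≤ 1 / ((n : ℝ) + 1) := by
      have hA1 : ε * (2 * R ^ 2) ≤ 1 / ((N : ℝ) + 1) := by
        rw [hεdef, div_mul_eq_mul_div, one_mul, div_le_div_iff₀ (by positivity) (by positivity)]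
        nlinarith
      have hA2 : 1 / ((N : ℝ) + 1) ≤ 1 / ((n : ℝ) + 1) :=
        one_div_le_one_div_of_le (by positivity) (by linarith)
      linarith
    have hε2 : ε * ⟪(y : H) - x, x⟫ ≤ ε * (2 * R ^ 2) :=
      mul_le_mul_of_nonneg_left hin hεpos.le
    have hc1 : -(1 / ((n : ℝ) + 1)) ≤ ⟪(y : H) - x, A (y : H)⟫ := by linarith
    have hsplit : ⟪(y : H) - x, A (y : H)⟫ = ⟪A (y : H), (y : H)⟫ - ⟪A (y : H), x⟫ := by
      rw [inner_sub_left, real_inner_comm (y : H), real_inner_comm x]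
    linarith
  obtain ⟨x, hxC, hx⟩ := key
  have hMinty : ∀ y ∈ C, 0 ≤ ⟪y - x, A y⟫ := by
    intro y hyC
    have hAll : ∀ n : ℕ, ⟪A y, x⟫ ≤ ⟪A y, y⟫ + 1 / ((n : ℝ) + 1) := fun n => hx (⟨y, hyC⟩, n)
    have hle : ⟪A y, x⟫ ≤ ⟪A y, y⟫ := by
      by_contra hlt
      push_neg at hlt
      obtain ⟨n, hn⟩ := exists_nat_one_div_lt (sub_pos.2 hlt)
      linarith [hAll n]
    have hsplit : ⟪y - x, A y⟫ = ⟪A y, y⟫ - ⟪A y, x⟫ := by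
      rw [inner_sub_left, real_inner_comm y, real_inner_comm x]
    linarith
  refine ⟨x, hxC, fun y hyC => ?_⟩
  have hAcont : Continuous A := by
    have hlip : LipschitzWith (Real.toNNReal K) A := by
      apply LipschitzWith.of_dist_le_mul
      intro a b
      rw [dist_eq_norm, dist_eq_norm, Real.coe_toNNReal K hK0]
      exact hALip a b
    exact hlip.continuous
  set g : ℝ → ℝ := fun t => ⟪y - x, A (x + t • (y - x))⟫ with hgdef
  have hgcont : Continuous g := by
    apply Continuous.inner continuous_const
    exact hAcont.comp (continuous_const.add (continuous_id.smul continuous_const))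
  have hgpos : ∀ t ∈ Set.Ioc (0 : ℝ) 1, 0 ≤ g t := by
    intro t ht
    have hz : x + t • (y - x) ∈ C := by
      have hco := hCcv hxC hyC (by linarith [ht.2] : (0:ℝ) ≤ 1 - t) ht.1.le (by ring)
      have he : x + t • (y - x) = (1 - t) • x + t • y := by
        rw [smul_sub, sub_smul, one_smul]; abel
      rw [he]; exact hco
    have h0 := hMinty _ hz
    have he2 : (x + t • (y - x)) - x = t • (y - x) := by abel
    rw [he2, real_inner_smul_left] at h0
    nlinarith [ht.1]
  have hg0 : 0 ≤ g 0 := by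
    have htend : Filter.Tendsto g (nhdsWithin 0 (Set.Ioi 0)) (nhds (g 0)) :=
      (hgcont.tendsto 0).mono_left nhdsWithin_le_nhds
    refine ge_of_tendsto htend ?_
    filter_upwards [Ioc_mem_nhdsGT_of_mem (⟨le_refl (0:ℝ), zero_lt_one⟩ : (0:ℝ) ∈ Set.Ico 0 1)]
      with t ht using hgpos t ht
  have hg0eq : g 0 = ⟪y - x, A x⟫ := by simp [hgdef]
  rw [ge_iff_le, ← hAdj x (y - x)]
  rw [hg0eq] at hg0
  exact hg0
end

section
/- Suppose that ran N_C + Σ_{i∈I} ω_i L_i*(ran F_i) = H, where ran N_C = ⋃_{x∈C} N_C x, ran F_i = {F_i y : y ∈ G_i}, and the sum is the Minkowski sum of the sets {Σ_{i∈I} ω_i L_i* v_i : v_i ∈ ran F_i} with ran N_C. Then the relaxed problem has a solution: there exists x ∈ C such that Σ_{i∈I} ω_i ⟪L_i(y − x), F_i(L_i x) − p_i⟫ ≥ 0 for every y ∈ C. -/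
open RealInnerProductSpace Pointwise

/-- The normal cone to a set `C` at `x`: the usual normal cone when `x ∈ C`, and `∅`
otherwise. -/
def normalCone {H : Type*} [NormedAddCommGroup H] [InnerProductSpace ℝ H]
    (C : Set H) : H → Set H :=
  fun z => {u : H | z ∈ C ∧ ∀ y ∈ C, ⟪y - z, u⟫ ≤ 0}


lemma proj_spec {H : Type*} [NormedAddCommGroup H] [InnerProductSpace ℝ H] [CompleteSpace H]
    {C : Set H} (hne : C.Nonempty) (hcl : IsClosed C) (hcv : Convex ℝ C) (u : H) :
    ∃ z ∈ C, ∀ w ∈ C, ⟪u - z, w - z⟫ ≤ 0 := by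
  obtain ⟨v, hv, hmin⟩ := exists_norm_eq_iInf_of_complete_convex hne hcl.isComplete hcv u
  exact ⟨v, hv, (norm_eq_iInf_iff_real_inner_le_zero hcv hv).1 hmin⟩

lemma fne_aux {b t : ℝ} (hb : 0 ≤ b) (h : t^2 ≤ b * t) : t ≤ b := by nlinarith

set_option maxHeartbeats 1000000 in
lemma exists_VI_eps {H : Type*} [NormedAddCommGroup H] [InnerProductSpace ℝ H] [CompleteSpace H]
    {C : Set H} (hne : C.Nonempty) (hcl : IsClosed C) (hcv : Convex ℝ C)
    (B : H → H) (Λ : ℝ) (hΛ : 0 ≤ Λ)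
    (hmono : ∀ u v, 0 ≤ ⟪u - v, B u - B v⟫)
    (hlip : ∀ u v, ‖B u - B v‖ ≤ Λ * ‖u - v‖)
    (ε : ℝ) (hε : 0 < ε) :
    ∃ x ∈ C, ∀ y ∈ C, 0 ≤ ⟪y - x, ε • x + B x⟫ := by
  choose P hPmem hPle using proj_spec hne hcl hcv
  have hεΛ : 0 < ε + Λ := by linarith
  set γ : ℝ := ε / (ε + Λ)^2 with hγdef
  have hγ : 0 < γ := div_pos hε (by positivity)
  set κ : ℝ := Real.sqrt (1 - ε^2/(ε+Λ)^2) with hκdef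
  have hfrac_pos : 0 < ε^2/(ε+Λ)^2 := by positivity
  have hfrac_le : ε^2/(ε+Λ)^2 ≤ 1 := by
    rw [div_le_one (by positivity)]; nlinarith
  have hκ0 : 0 ≤ κ := Real.sqrt_nonneg _
  have hκsq : κ^2 = 1 - ε^2/(ε+Λ)^2 := Real.sq_sqrt (by linarith)
  have hκ1 : κ < 1 := by nlinarith
  have hγval : γ * (ε + Λ)^2 = ε := by rw [hγdef, div_mul_cancel₀ _ (by positivity)]
  have hfrac_eq : ε^2/(ε+Λ)^2 = γ * ε := by
    rw [hγdef]; field_simp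
  -- core contraction estimate
  have core : ∀ u v : H, ‖(u - γ • (ε • u + B u)) - (v - γ • (ε • v + B v))‖ ≤ κ * ‖u - v‖ := by
    intro u v
    set d : H := ε • (u - v) + (B u - B v) with hd
    have hveq : (u - γ • (ε • u + B u)) - (v - γ • (ε • v + B v)) = (u - v) - γ • d := by
      rw [hd]; simp [smul_sub, smul_add]; abel
    have hdnorm : ‖d‖ ≤ (ε + Λ) * ‖u - v‖ := by
      calc ‖d‖ ≤ ‖ε • (u - v)‖ + ‖B u - B v‖ := norm_add_le _ _
        _ ≤ ε * ‖u - v‖ + Λ * ‖u - v‖ := by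
            rw [norm_smul, Real.norm_eq_abs, abs_of_pos hε]
            gcongr
            exact hlip u v
        _ = (ε + Λ) * ‖u - v‖ := by ring
    have hinner : ε * ‖u - v‖^2 ≤ ⟪u - v, d⟫ := by
      rw [hd, inner_add_right, real_inner_smul_right, real_inner_self_eq_norm_sq]
      have := hmono u v; linarith
    have hsq : ‖(u - v) - γ • d‖^2 ≤ κ^2 * ‖u - v‖^2 := by
      have hexp : ‖(u - v) - γ • d‖^2 = ‖u - v‖^2 - 2 * γ * ⟪u - v, d⟫ + γ^2 * ‖d‖^2 := by
        rw [@norm_sub_sq_real, real_inner_smul_right, norm_smul, Real.norm_eq_abs,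
          abs_of_pos hγ]
        ring
      have hd2 : ‖d‖^2 ≤ (ε+Λ)^2 * ‖u - v‖^2 := by
        nlinarith [norm_nonneg d, norm_nonneg (u - v)]
      rw [hexp, hκsq, hfrac_eq]
      have h1 : 2 * γ * (ε * ‖u - v‖^2) ≤ 2 * γ * ⟪u - v, d⟫ := by nlinarith
      have h2 : γ^2 * ‖d‖^2 ≤ γ^2 * ((ε+Λ)^2 * ‖u - v‖^2) := by nlinarith
      have h3 : γ^2 * ((ε+Λ)^2 * ‖u - v‖^2) = γ * ε * ‖u - v‖^2 := by
        rw [show γ^2 * ((ε+Λ)^2 * ‖u - v‖^2) = (γ*(ε+Λ)^2) * (γ * ‖u - v‖^2) by ring, hγval]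
        ring
      nlinarith [sq_nonneg ‖u - v‖]
    calc ‖(u - γ • (ε • u + B u)) - (v - γ • (ε • v + B v))‖ = ‖(u-v) - γ • d‖ := by rw [hveq]
      _ = Real.sqrt (‖(u-v) - γ • d‖^2) := by rw [Real.sqrt_sq (norm_nonneg _)]
      _ ≤ Real.sqrt (κ^2 * ‖u - v‖^2) := Real.sqrt_le_sqrt hsq
      _ = κ * ‖u - v‖ := by
          rw [Real.sqrt_mul (sq_nonneg _), Real.sqrt_sq hκ0, Real.sqrt_sq (norm_nonneg _)]
  -- the fixed point map on C
  haveI : Nonempty C := hne.to_subtype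
  haveI : CompleteSpace C := hcl.completeSpace_coe
  set f : C → C := fun x => ⟨P ((x : H) - γ • (ε • (x : H) + B x)), hPmem _⟩ with hf
  have hcontr : ContractingWith κ.toNNReal f := by
    constructor
    · rw [← Real.toNNReal_one]
      exact (Real.toNNReal_lt_toNNReal_iff one_pos).2 hκ1
    · apply LipschitzWith.of_dist_le_mul
      intro a b
      rw [Subtype.dist_eq, dist_eq_norm, Subtype.dist_eq, dist_eq_norm,
        Real.coe_toNNReal _ hκ0]
      set u := (a:H) - γ • (ε • (a:H) + B (a:H)) with hu
      set v := (b:H) - γ • (ε • (b:H) + B (b:H)) with hv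
      have hfa : (f a : H) = P u := rfl
      have hfb : (f b : H) = P v := rfl
      rw [hfa, hfb]
      have hfirm : ‖P u - P v‖^2 ≤ ⟪u - v, P u - P v⟫ := by
        have ha := hPle u (P v) (hPmem v)
        have hb := hPle v (P u) (hPmem u)
        have hb' : 0 ≤ ⟪v - P v, P v - P u⟫ := by
          rw [show P v - P u = -(P u - P v) by abel, inner_neg_right]; linarith
        have hkey : ⟪(u - P u) - (v - P v), P v - P u⟫ ≤ 0 := by
          rw [inner_sub_left]; linarith
        rw [← real_inner_self_eq_norm_sq]
        have hexp : ⟪u - v, P u - P v⟫ - ⟪P u - P v, P u - P v⟫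
            = -⟪(u - P u) - (v - P v), P v - P u⟫ := by
          rw [← inner_neg_right, show -(P v - P u) = P u - P v by abel, ← inner_sub_left,
            show u - v - (P u - P v) = (u - P u) - (v - P v) by abel]
        linarith
      have hn : ‖P u - P v‖ ≤ ‖u - v‖ := by
        have hcs := real_inner_le_norm (u - v) (P u - P v)
        exact fne_aux (norm_nonneg _) (by linarith)
      refine hn.trans ?_
      rw [hu, hv]
      exact core a b
  obtain ⟨x₀, hx₀⟩ := hcontr.exists_fixedPoint (Classical.arbitrary C)
    (by rw [edist_dist]; exact ENNReal.ofReal_ne_top)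
  obtain ⟨hfix, -⟩ := hx₀
  refine ⟨(x₀ : H), x₀.2, ?_⟩
  intro y hy
  have hfixv : P ((x₀:H) - γ • (ε • (x₀:H) + B x₀)) = (x₀ : H) :=
    congrArg Subtype.val hfix
  have hkey := hPle ((x₀:H) - γ • (ε • (x₀:H) + B x₀)) y hy
  rw [hfixv] at hkey
  have heq : (x₀:H) - γ • (ε • (x₀:H) + B x₀) - (x₀:H) = -(γ • (ε • (x₀:H) + B x₀)) := by abel
  rw [heq, inner_neg_left, real_inner_smul_left] at hkey
  rw [real_inner_comm] at hkey
  exact (mul_nonneg_iff_of_pos_left hγ).mp (by linarith)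

lemma quarter_aux {b t : ℝ} (hb : 0 ≤ b) : -t^2 + b * t ≤ b^2/4 := by nlinarith [sq_nonneg (t - b/2)]

set_option maxHeartbeats 1600000 in
/-- If `ran N_C + Σᵢ ωᵢ Lᵢ*(ran Fᵢ) = H`, the relaxed variational inequality problem has
a solution. -/
theorem relaxed_has_solution_of_range_eq_univ
    {H : Type*} [NormedAddCommGroup H] [InnerProductSpace ℝ H] [CompleteSpace H]
    {I : Type*} [Fintype I] [Nonempty I]
    (G : I → Type*) [∀ i, NormedAddCommGroup (G i)] [∀ i, InnerProductSpace ℝ (G i)]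
    [∀ i, CompleteSpace (G i)]
    (ω : I → ℝ) (hω : ∀ i, ω i ∈ Set.Ioo (0 : ℝ) 1) (hωsum : ∑ i, ω i = 1)
    (C : Set H) (hCne : C.Nonempty) (hCcl : IsClosed C) (hCcv : Convex ℝ C)
    (p : ∀ i, G i) (L : ∀ i, H →L[ℝ] G i) (hL : ∀ i, L i ≠ 0)
    (F : ∀ i, G i → G i)
    (hF : ∀ i, ∀ u v : G i, ⟪u - v, F i u - F i v⟫ ≥ ‖F i u - F i v‖ ^ 2)
    (hrange : (⋃ x : H, normalCone C x)
        + {w : H | ∃ v : ∀ i, G i, (∀ i, v i ∈ Set.range (F i)) ∧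
            w = ∑ i, ω i • (ContinuousLinearMap.adjoint (L i)) (v i)} = Set.univ) :
    ∃ x ∈ C, ∀ y ∈ C, (∑ i, ω i * ⟪L i (y - x), F i (L i x) - p i⟫) ≥ 0 := by
  classical
  have hωpos : ∀ i, 0 < ω i := fun i => (hω i).1
  set B : H → H := fun z => ∑ i, ω i • (ContinuousLinearMap.adjoint (L i)) (F i (L i z) - p i)
    with hB
  -- generic inner-product identity
  have hsum_inner : ∀ (y : H) (g : ∀ i, G i),
      ⟪y, ∑ i, ω i • (ContinuousLinearMap.adjoint (L i)) (g i)⟫ = ∑ i, ω i * ⟪L i y, g i⟫ := by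
    intro y g
    rw [inner_sum]
    exact Finset.sum_congr rfl fun i _ => by
      rw [real_inner_smul_right, ContinuousLinearMap.adjoint_inner_right]
  have hBinner : ∀ z y : H, ⟪y, B z⟫ = ∑ i, ω i * ⟪L i y, F i (L i z) - p i⟫ := fun z y =>
    hsum_inner y _
  -- F is nonexpansive
  have hFne : ∀ i (a b : G i), ‖F i a - F i b‖ ≤ ‖a - b‖ := by
    intro i a b
    have h1 := hF i a b
    have h2 := real_inner_le_norm (a - b) (F i a - F i b)
    exact fne_aux (norm_nonneg _) (by linarith)
  set Λ : ℝ := ∑ i, ω i * ‖L i‖^2 with hΛ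
  have hΛ0 : 0 ≤ Λ := Finset.sum_nonneg fun i _ => mul_nonneg (hωpos i).le (sq_nonneg _)
  -- B is monotone
  have hBmono : ∀ u v : H, 0 ≤ ⟪u - v, B u - B v⟫ := by
    intro u v
    rw [inner_sub_right, hBinner, hBinner, ← Finset.sum_sub_distrib]
    apply Finset.sum_nonneg
    intro i _
    rw [← mul_sub, ← inner_sub_right,
      show F i (L i u) - p i - (F i (L i v) - p i) = F i (L i u) - F i (L i v) by abel,
      map_sub]
    exact mul_nonneg (hωpos i).le (le_trans (sq_nonneg _) (hF i (L i u) (L i v)))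
  -- B is Lipschitz
  have hBlip : ∀ u v : H, ‖B u - B v‖ ≤ Λ * ‖u - v‖ := by
    intro u v
    have hBdiff : B u - B v
        = ∑ i, ω i • (ContinuousLinearMap.adjoint (L i)) (F i (L i u) - F i (L i v)) := by
      rw [hB, ← Finset.sum_sub_distrib]
      refine Finset.sum_congr rfl fun i _ => ?_
      rw [← smul_sub, ← map_sub,
        show F i (L i u) - p i - (F i (L i v) - p i) = F i (L i u) - F i (L i v) by abel]
    rw [hBdiff]
    calc ‖∑ i, ω i • (ContinuousLinearMap.adjoint (L i)) (F i (L i u) - F i (L i v))‖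
        ≤ ∑ i, ‖ω i • (ContinuousLinearMap.adjoint (L i)) (F i (L i u) - F i (L i v))‖ :=
          norm_sum_le _ _
      _ ≤ ∑ i, ω i * ‖L i‖^2 * ‖u - v‖ := by
          apply Finset.sum_le_sum
          intro i _
          rw [norm_smul, Real.norm_eq_abs, abs_of_pos (hωpos i)]
          have hadj : ‖(ContinuousLinearMap.adjoint (L i)) (F i (L i u) - F i (L i v))‖
              ≤ ‖L i‖ * ‖F i (L i u) - F i (L i v)‖ := by
            have h := (ContinuousLinearMap.adjoint (L i)).le_opNorm (F i (L i u) - F i (L i v))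
            rwa [LinearIsometryEquiv.norm_map ContinuousLinearMap.adjoint (L i)] at h
          have h2 : ‖F i (L i u) - F i (L i v)‖ ≤ ‖L i‖ * ‖u - v‖ := by
            refine le_trans (hFne i _ _) ?_
            rw [← map_sub]
            exact (L i).le_opNorm _
          calc ω i * ‖(ContinuousLinearMap.adjoint (L i)) (F i (L i u) - F i (L i v))‖
              ≤ ω i * (‖L i‖ * (‖L i‖ * ‖u - v‖)) := by
                refine mul_le_mul_of_nonneg_left (hadj.trans ?_) (hωpos i).le
                exact mul_le_mul_of_nonneg_left h2 (norm_nonneg _)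
            _ = ω i * ‖L i‖^2 * ‖u - v‖ := by ring
      _ = Λ * ‖u - v‖ := by rw [hΛ, Finset.sum_mul]
  -- the regularized solutions
  set e : ℕ → ℝ := fun n => 1/(n+1) with he
  have he_pos : ∀ n, 0 < e n := fun n => by positivity
  have he_le1 : ∀ n, e n ≤ 1 := fun n => by
    rw [he]; simp only []
    rw [div_le_one (by positivity)]
    linarith [Nat.cast_nonneg (α := ℝ) n]
  have he_anti : ∀ n m : ℕ, n ≤ m → e m ≤ e n := by
    intro n m hnm
    apply one_div_le_one_div_of_le (by positivity)
    have : (n:ℝ) ≤ m := Nat.cast_le.mpr hnm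
    linarith
  have hex : ∀ n : ℕ, ∃ x ∈ C, ∀ y ∈ C, 0 ≤ ⟪y - x, e n • x + B x⟫ :=
    fun n => exists_VI_eps hCne hCcl hCcv B Λ hΛ0 hBmono hBlip (e n) (he_pos n)
  choose x hxC hxVI using hex
  -- the uniform bound via Banach–Steinhaus
  set q : H := ∑ i, ω i • (ContinuousLinearMap.adjoint (L i)) (p i) with hq
  have hbound : ∀ w : H, ∃ c : ℝ, ∀ n, ⟪x n, w⟫ ≤ c := by
    intro w
    have hmem : w + q ∈ (⋃ x : H, normalCone C x)
        + {w : H | ∃ v : ∀ i, G i, (∀ i, v i ∈ Set.range (F i)) ∧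
            w = ∑ i, ω i • (ContinuousLinearMap.adjoint (L i)) (v i)} := by
      rw [hrange]; trivial
    obtain ⟨a, ha, s, hs, hsum⟩ := Set.mem_add.mp hmem
    obtain ⟨z, hz⟩ := Set.mem_iUnion.mp ha
    obtain ⟨hzC, hna⟩ := hz
    obtain ⟨v, hvmem, hveq⟩ := hs
    choose u hu using hvmem
    refine ⟨(∑ i, ω i * (‖u i - L i z‖^2/4)) + ‖z‖^2/4 + ⟪z, w⟫, ?_⟩
    intro n
    -- (1) normal cone term
    have h1 : ⟪x n - z, a⟫ ≤ 0 := hna (x n) (hxC n)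
    -- (2) rectangularity term
    have hdiff : s - q - B (x n)
        = ∑ i, ω i • (ContinuousLinearMap.adjoint (L i)) (F i (u i) - F i (L i (x n))) := by
      rw [hveq, hq, hB, ← Finset.sum_sub_distrib, ← Finset.sum_sub_distrib]
      refine Finset.sum_congr rfl fun i _ => ?_
      rw [← smul_sub, ← smul_sub, ← map_sub, ← map_sub, hu i]
      congr 2
      abel
    have h2 : ⟪x n - z, s - q - B (x n)⟫ ≤ ∑ i, ω i * (‖u i - L i z‖^2/4) := by
      rw [hdiff, hsum_inner]
      apply Finset.sum_le_sum
      intro i _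
      refine mul_le_mul_of_nonneg_left ?_ (hωpos i).le
      set d : G i := F i (u i) - F i (L i (x n)) with hd
      have hf1 : ‖d‖^2 ≤ ⟪u i - L i (x n), d⟫ := hF i (u i) (L i (x n))
      have hsplit : ⟪L i (x n - z), d⟫ = ⟪L i (x n) - u i, d⟫ + ⟪u i - L i z, d⟫ := by
        rw [← inner_add_left, map_sub]
        congr 1
        abel
      have hcs := real_inner_le_norm (u i - L i z) d
      have hneg : ⟪L i (x n) - u i, d⟫ ≤ -‖d‖^2 := by
        rw [show L i (x n) - u i = -(u i - L i (x n)) by abel, inner_neg_left]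
        linarith
      have hq4 := quarter_aux (b := ‖u i - L i z‖) (t := ‖d‖) (norm_nonneg _)
      calc ⟪L i (x n - z), d⟫ ≤ -‖d‖^2 + ‖u i - L i z‖ * ‖d‖ := by
            rw [hsplit]; linarith
        _ ≤ ‖u i - L i z‖^2/4 := hq4
    -- (3) the VI term
    have h3 : ⟪x n - z, B (x n)⟫ ≤ ‖z‖^2/4 := by
      have hv := hxVI n z hzC
      rw [inner_add_right, show z - x n = -(x n - z) by abel, inner_neg_left,
        inner_neg_left, real_inner_smul_right] at hv
      have hxx : ⟪x n - z, x n⟫ = ‖x n‖^2 - ⟪z, x n⟫ := by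
        rw [inner_sub_left, real_inner_self_eq_norm_sq]
      have hcs : ⟪z, x n⟫ ≤ ‖z‖ * ‖x n‖ := real_inner_le_norm _ _
      have hq4 := quarter_aux (b := ‖z‖) (t := ‖x n‖) (norm_nonneg _)
      have hen := he_pos n
      have hen1 := he_le1 n
      have hBle : ⟪x n - z, B (x n)⟫ ≤ e n * (-(‖x n‖^2) + ‖z‖ * ‖x n‖) := by
        have : ⟪x n - z, B (x n)⟫ ≤ -(e n * ⟪x n - z, x n⟫) := by linarith
        rw [hxx] at this
        refine this.trans ?_
        have := mul_le_mul_of_nonneg_left hcs hen.le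
        nlinarith
      refine hBle.trans ?_
      have h5 : -(‖x n‖^2) + ‖z‖ * ‖x n‖ ≤ ‖z‖^2/4 := by
        have := hq4; linarith
      rcases le_or_gt (-(‖x n‖^2) + ‖z‖ * ‖x n‖) 0 with hcase | hcase
      · nlinarith
      · nlinarith
    -- combine
    have hw : (w : H) = a + (s - q) := by
      have : a + s = w + q := hsum
      rw [show a + (s - q) = a + s - q by abel, this]; abel
    have hfull : ⟪x n - z, w⟫ ≤ (∑ i, ω i * (‖u i - L i z‖^2/4)) + ‖z‖^2/4 := by
      rw [hw, inner_add_right,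
        show s - q = (s - q - B (x n)) + B (x n) by abel, inner_add_right]
      linarith
    have hxw : ⟪x n, w⟫ = ⟪x n - z, w⟫ + ⟪z, w⟫ := by
      rw [← inner_add_left]
      congr 1
      abel
    rw [hxw]
    linarith
  obtain ⟨M, hM⟩ : ∃ M : ℝ, ∀ n, ‖x n‖ ≤ M := by
    have hpt : ∀ w : H, ∃ c : ℝ, ∀ n : ℕ, ‖(innerSL ℝ (x n)) w‖ ≤ c := by
      intro w
      obtain ⟨c1, h1⟩ := hbound w
      obtain ⟨c2, h2⟩ := hbound (-w)
      refine ⟨max c1 c2, fun n => ?_⟩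
      have hinn : (innerSL ℝ (x n)) w = ⟪x n, w⟫ := rfl
      rw [hinn, Real.norm_eq_abs]
      rw [abs_le]
      constructor
      · have := h2 n
        rw [inner_neg_right] at this
        have hc2 : -(max c1 c2) ≤ -c2 := by
          simp only [neg_le_neg_iff]
          exact le_max_right _ _
        linarith
      · exact (h1 n).trans (le_max_left _ _)
    obtain ⟨M, hM⟩ := banach_steinhaus hpt
    refine ⟨M, fun n => ?_⟩
    have := hM n
    rwa [innerSL_apply_norm] at this
  have hM0 : 0 ≤ M := (norm_nonneg _).trans (hM 0)
  -- pairwise monotonicity estimate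
  have hpair : ∀ m n : ℕ, ⟪x n - x m, (e n) • x n - (e m) • x m⟫ ≤ 0 := by
    intro m n
    have h1 := hxVI n (x m) (hxC m)
    have h2 := hxVI m (x n) (hxC n)
    have h3 := hBmono (x n) (x m)
    have h1' : ⟪x n - x m, e n • x n⟫ + ⟪x n - x m, B (x n)⟫ ≤ 0 := by
      rw [show x m - x n = -(x n - x m) by abel, inner_neg_left, inner_add_right] at h1
      linarith
    have h2' : 0 ≤ ⟪x n - x m, e m • x m⟫ + ⟪x n - x m, B (x m)⟫ := by
      rw [inner_add_right] at h2; linarith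
    have h3' : ⟪x n - x m, B (x m)⟫ ≤ ⟪x n - x m, B (x n)⟫ := by
      rw [inner_sub_right] at h3; linarith
    rw [inner_sub_right]
    linarith
  have hkey2 : ∀ n m : ℕ, n ≤ m →
      (e n + e m) * ‖x n - x m‖^2 ≤ (e n - e m) * (‖x m‖^2 - ‖x n‖^2) := by
    intro n m hnm
    have hexp : e n * ‖x n‖^2 + e m * ‖x m‖^2 - (e n + e m) * ⟪x m, x n⟫ ≤ 0 := by
      have hp := hpair m n
      simp only [inner_sub_left, inner_sub_right, real_inner_smul_right] at hp
      rw [real_inner_self_eq_norm_sq, real_inner_self_eq_norm_sq,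
        real_inner_comm (x m) (x n)] at hp
      linarith [hp]
    have hns : ‖x n - x m‖^2 = ‖x n‖^2 - 2*⟪x n, x m⟫ + ‖x m‖^2 := by
      rw [@norm_sub_sq_real]
    rw [hns, real_inner_comm (x m) (x n)]
    nlinarith [hexp]
  -- the squared norms are nondecreasing and bounded
  have hmono_a : Monotone (fun k => ‖x k‖^2) := by
    intro n m hnm
    show ‖x n‖^2 ≤ ‖x m‖^2
    rcases eq_or_lt_of_le hnm with rfl | hlt
    · exact le_refl _
    · have h := hkey2 n m hnm
      have he1 : e m < e n := by
        rw [he]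
        apply one_div_lt_one_div_of_lt (by positivity)
        have : (n:ℝ) < m := Nat.cast_lt.mpr hlt
        linarith
      nlinarith [sq_nonneg ‖x n - x m‖, he_pos n, he_pos m]
  have hcauchy_est : ∀ n m : ℕ, n ≤ m → ‖x n - x m‖^2 ≤ ‖x m‖^2 - ‖x n‖^2 := by
    intro n m hnm
    have h := hkey2 n m hnm
    have hmn := hmono_a hnm
    have h1 := he_anti n m hnm
    have h2 := he_pos m
    have h3 := he_pos n
    have hfac : (e n - e m) * (‖x m‖^2 - ‖x n‖^2) ≤ (e n + e m) * (‖x m‖^2 - ‖x n‖^2) := by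
      apply mul_le_mul_of_nonneg_right (by linarith) (by simpa using hmn)
    have hpos : 0 < e n + e m := by linarith
    nlinarith
  -- convergence of norms
  have hbdd : BddAbove (Set.range fun k => ‖x k‖^2) := by
    refine ⟨M^2, ?_⟩
    rintro _ ⟨k, rfl⟩
    show ‖x k‖^2 ≤ M^2
    have := hM k
    nlinarith [norm_nonneg (x k)]
  have hlim_a := tendsto_atTop_ciSup hmono_a hbdd
  set ℓ : ℝ := ⨆ k, ‖x k‖^2 with hℓ
  have ha_le : ∀ k, ‖x k‖^2 ≤ ℓ := fun k => le_ciSup hbdd k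
  -- Cauchy
  have hcauchy : CauchySeq x := by
    apply cauchySeq_of_le_tendsto_0 (fun N => Real.sqrt (ℓ - ‖x N‖^2))
    · intro n m N hn hm
      rcases le_total n m with hnm | hmn
      · have h := hcauchy_est n m hnm
        rw [dist_eq_norm]
        rw [show ‖x n - x m‖ = Real.sqrt (‖x n - x m‖^2) by rw [Real.sqrt_sq (norm_nonneg _)]]
        apply Real.sqrt_le_sqrt
        have h1 := ha_le m
        have h2 := hmono_a hn
        simp only [] at h2
        linarith
      · have h := hcauchy_est m n hmn
        rw [dist_eq_norm, ← norm_neg, show -(x n - x m) = x m - x n by abel]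
        rw [show ‖x m - x n‖ = Real.sqrt (‖x m - x n‖^2) by rw [Real.sqrt_sq (norm_nonneg _)]]
        apply Real.sqrt_le_sqrt
        have h1 := ha_le n
        have h2 := hmono_a hm
        simp only [] at h2
        linarith
    · have h0 : Filter.Tendsto (fun N => ℓ - ‖x N‖^2) Filter.atTop (nhds 0) := by
        have hc : Filter.Tendsto (fun _ : ℕ => ℓ) Filter.atTop (nhds ℓ) := tendsto_const_nhds
        have hsub := hc.sub hlim_a
        simpa using hsub
      have := (Real.continuous_sqrt.tendsto 0).comp h0
      simpa using (by exact this : Filter.Tendsto (fun N => Real.sqrt (ℓ - ‖x N‖^2)) Filter.atTop (nhds (Real.sqrt 0)))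
  obtain ⟨xbar, hxbar⟩ := cauchySeq_tendsto_of_complete hcauchy
  have hxbarC : xbar ∈ C := hCcl.mem_of_tendsto hxbar (Filter.Eventually.of_forall hxC)
  refine ⟨xbar, hxbarC, ?_⟩
  intro y hy
  -- pass to the limit in the VI
  have hcomp1 : Filter.Tendsto (fun n => e n • x n) Filter.atTop (nhds 0) := by
    apply squeeze_zero_norm (a := fun n => e n * M)
    · intro n
      rw [norm_smul, Real.norm_eq_abs, abs_of_pos (he_pos n)]
      exact mul_le_mul_of_nonneg_left (hM n) (he_pos n).le
    · have h1 : Filter.Tendsto e Filter.atTop (nhds 0) :=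
        tendsto_one_div_add_atTop_nhds_zero_nat
      have h2 := h1.mul_const M
      rw [zero_mul] at h2
      exact h2
  have hcomp2 : Filter.Tendsto (fun n => B (x n)) Filter.atTop (nhds (B xbar)) := by
    rw [tendsto_iff_norm_sub_tendsto_zero]
    apply squeeze_zero_norm (a := fun n => Λ * ‖x n - xbar‖)
    · intro n
      rw [norm_norm]
      exact hBlip (x n) xbar
    · have h1 : Filter.Tendsto (fun n => ‖x n - xbar‖) Filter.atTop (nhds 0) := by
        rw [← tendsto_iff_norm_sub_tendsto_zero]
        exact hxbar
      simpa using h1.const_mul Λ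
  have hcompsum : Filter.Tendsto (fun n => e n • x n + B (x n)) Filter.atTop (nhds (B xbar)) := by
    have := hcomp1.add hcomp2
    simpa using this
  have hcompleft : Filter.Tendsto (fun n => y - x n) Filter.atTop (nhds (y - xbar)) :=
    tendsto_const_nhds.sub hxbar
  have hinner_lim : Filter.Tendsto (fun n => ⟪y - x n, e n • x n + B (x n)⟫)
      Filter.atTop (nhds ⟪y - xbar, B xbar⟫) := hcompleft.inner hcompsum
  have hlimpos : 0 ≤ ⟪y - xbar, B xbar⟫ :=
    ge_of_tendsto hinner_lim (Filter.Eventually.of_forall fun n => hxVI n y hy)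
  have hfin : ⟪y - xbar, B xbar⟫ = ∑ i, ω i * ⟪L i (y - xbar), F i (L i xbar) - p i⟫ :=
    hBinner xbar (y - xbar)
  rw [← hfin] at *
  exact hlimpos
end

section
/- Suppose that for some i ∈ I the adjoint L_i* : G_i → H is surjective and F_i is surjective. Then the relaxed problem has a solution: there exists x ∈ C such that Σ_{j∈I} ω_j ⟪L_j(y − x), F_j(L_j x) − p_j⟫ ≥ 0 for every y ∈ C. -/
open RealInnerProductSpace Pointwise

section Helpers
variable {E : Type*} [NormedAddCommGroup E] [InnerProductSpace ℝ E] [CompleteSpace E]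

/-- Existence of the metric projection onto a nonempty closed convex set, with its
variational characterization. -/
private lemma exists_proj {C : Set E} (hCne : C.Nonempty) (hCcl : IsClosed C)
    (hCcv : Convex ℝ C) (u : E) : ∃ v ∈ C, ∀ w ∈ C, ⟪u - v, w - v⟫ ≤ 0 := by
  obtain ⟨v, hv, hnorm⟩ :=
    exists_norm_eq_iInf_of_complete_convex hCne hCcl.isComplete hCcv u
  exact ⟨v, hv, (norm_eq_iInf_iff_real_inner_le_zero hCcv hv).1 hnorm⟩

/-- Banach fixed point theorem, for a contraction mapping a closed set into itself. -/
private lemma exists_fixedPoint_of_contraction {C : Set E} (hCne : C.Nonempty)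
    (hCcl : IsClosed C) {f : E → E} (hfC : ∀ x, f x ∈ C) {κ : ℝ} (hκ0 : 0 ≤ κ) (hκ1 : κ < 1)
    (hlip : ∀ x y, ‖f x - f y‖ ≤ κ * ‖x - y‖) : ∃ x ∈ C, f x = x := by
  have hmaps : Set.MapsTo f C C := fun x _ => hfC x
  have hl : LipschitzWith κ.toNNReal (hmaps.restrict f C C) := by
    apply LipschitzWith.of_dist_le_mul
    intro x y
    have h := hlip x y
    simpa [Subtype.dist_eq, dist_eq_norm, Real.coe_toNNReal κ hκ0] using h
  have hc : ContractingWith κ.toNNReal (hmaps.restrict f C C) := by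
    refine ⟨?_, hl⟩
    rw [← NNReal.coe_lt_coe]
    simpa [Real.coe_toNNReal κ hκ0] using hκ1
  obtain ⟨y, hyC, hy, -, -⟩ := hc.exists_fixedPoint' hCcl.isComplete hmaps hCne.some_mem
    (edist_ne_top _ _)
  exact ⟨y, hyC, hy⟩

end Helpers

set_option maxHeartbeats 10000000 in
/-- If for some `i`, `Lᵢ*` is surjective and `Fᵢ` is surjective, the relaxed variational
inequality problem has a solution. -/
theorem relaxed_has_solution_of_surjective
    {H : Type*} [NormedAddCommGroup H] [InnerProductSpace ℝ H] [CompleteSpace H]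
    {I : Type*} [Fintype I] [Nonempty I]
    (G : I → Type*) [∀ i, NormedAddCommGroup (G i)] [∀ i, InnerProductSpace ℝ (G i)]
    [∀ i, CompleteSpace (G i)]
    (ω : I → ℝ) (hω : ∀ i, ω i ∈ Set.Ioo (0 : ℝ) 1) (hωsum : ∑ i, ω i = 1)
    (C : Set H) (hCne : C.Nonempty) (hCcl : IsClosed C) (hCcv : Convex ℝ C)
    (p : ∀ i, G i) (L : ∀ i, H →L[ℝ] G i) (hL : ∀ i, L i ≠ 0)
    (F : ∀ i, G i → G i)
    (hF : ∀ i, ∀ u v : G i, ⟪u - v, F i u - F i v⟫ ≥ ‖F i u - F i v‖ ^ 2)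
    (i : I) (hadj : Function.Surjective (ContinuousLinearMap.adjoint (L i)))
    (hFsurj : Function.Surjective (F i)) :
    ∃ x ∈ C, ∀ y ∈ C, (∑ i, ω i * ⟪L i (y - x), F i (L i x) - p i⟫) ≥ 0 := by
  classical
  -- the monotone operator associated with the problem
  set T : H → H :=
    fun x => ∑ j, ω j • (ContinuousLinearMap.adjoint (L j)) (F j (L j x) - p j) with hT
  obtain ⟨z₀, hz₀⟩ := hCne
  have hωpos : ∀ j, (0:ℝ) < ω j := fun j => (hω j).1
  -- inner products against T
  have hT_inner : ∀ x y : H, ⟪y, T x⟫ = ∑ j, ω j * ⟪L j y, F j (L j x) - p j⟫ := by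
    intro x y
    rw [hT, inner_sum]
    refine Finset.sum_congr rfl fun j _ => ?_
    rw [real_inner_smul_right, real_inner_comm,
      ContinuousLinearMap.adjoint_inner_left, real_inner_comm]
  -- difference form
  have hT_inner_sub : ∀ x y d : H,
      ⟪d, T x - T y⟫ = ∑ j, ω j * ⟪L j d, F j (L j x) - F j (L j y)⟫ := by
    intro x y d
    rw [inner_sub_right, hT_inner, hT_inner, ← Finset.sum_sub_distrib]
    refine Finset.sum_congr rfl fun j _ => ?_
    rw [← mul_sub, ← inner_sub_right]
    congr 1
    abel
  -- Lipschitz-type bound for differences of F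
  have hFlip : ∀ (j) (u v : G j), ‖F j u - F j v‖ ≤ ‖u - v‖ := by
    intro j u v
    rcases eq_or_lt_of_le (norm_nonneg (F j u - F j v)) with h0 | h0
    · rw [← h0]; exact norm_nonneg _
    · have h1 := hF j u v
      have h2 := real_inner_le_norm (u - v) (F j u - F j v)
      nlinarith
  -- monotonicity of T
  have hT_mono : ∀ x y : H, (0:ℝ) ≤ ⟪x - y, T x - T y⟫ := by
    intro x y
    rw [hT_inner_sub]
    refine Finset.sum_nonneg fun j _ => mul_nonneg (hωpos j).le ?_
    have := hF j (L j x) (L j y)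
    have h2 : L j x - L j y = L j (x - y) := (map_sub (L j) x y).symm
    calc (0:ℝ) ≤ ‖F j (L j x) - F j (L j y)‖ ^ 2 := sq_nonneg _
    _ ≤ ⟪L j x - L j y, F j (L j x) - F j (L j y)⟫ := this
    _ = ⟪L j (x - y), F j (L j x) - F j (L j y)⟫ := by rw [h2]
  -- Lipschitz constant for T
  set ℓ : ℝ := ∑ j, ω j * ‖L j‖ ^ 2 with hℓ
  have hℓ0 : 0 ≤ ℓ := Finset.sum_nonneg fun j _ => mul_nonneg (hωpos j).le (sq_nonneg _)
  have hT_lip : ∀ x y : H, ‖T x - T y‖ ≤ ℓ * ‖x - y‖ := by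
    intro x y
    have h1 : T x - T y
        = ∑ j, ω j • (ContinuousLinearMap.adjoint (L j)) (F j (L j x) - F j (L j y)) := by
      rw [hT, ← Finset.sum_sub_distrib]
      refine Finset.sum_congr rfl fun j _ => ?_
      rw [← smul_sub, ← map_sub]
      congr 2
      abel
    rw [h1, hℓ, Finset.sum_mul]
    refine (norm_sum_le _ _).trans (Finset.sum_le_sum fun j _ => ?_)
    rw [norm_smul, Real.norm_eq_abs, abs_of_pos (hωpos j)]
    have h2 : ‖(ContinuousLinearMap.adjoint (L j)) (F j (L j x) - F j (L j y))‖
        ≤ ‖L j‖ * ‖F j (L j x) - F j (L j y)‖ := by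
      calc _ ≤ ‖ContinuousLinearMap.adjoint (L j)‖ * ‖F j (L j x) - F j (L j y)‖ :=
        (ContinuousLinearMap.adjoint (L j)).le_opNorm _
      _ = ‖L j‖ * ‖F j (L j x) - F j (L j y)‖ := by
        rw [ContinuousLinearMap.adjoint.norm_map (L j)]
    have h3 : ‖F j (L j x) - F j (L j y)‖ ≤ ‖L j‖ * ‖x - y‖ := by
      refine (hFlip j _ _).trans ?_
      rw [← map_sub]
      exact (L j).le_opNorm _
    calc ω j * ‖(ContinuousLinearMap.adjoint (L j)) (F j (L j x) - F j (L j y))‖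
        ≤ ω j * (‖L j‖ * (‖L j‖ * ‖x - y‖)) := by
          refine mul_le_mul_of_nonneg_left (h2.trans ?_) (hωpos j).le
          exact mul_le_mul_of_nonneg_left h3 (norm_nonneg _)
    _ = ω j * ‖L j‖ ^ 2 * ‖x - y‖ := by ring
  -- Step 1: existence of regularized solutions
  have hCne' : C.Nonempty := ⟨z₀, hz₀⟩
  obtain ⟨π, hπC, hπchar⟩ :
      ∃ π : H → H, (∀ u, π u ∈ C) ∧ ∀ u, ∀ w ∈ C, ⟪u - π u, w - π u⟫ ≤ 0 := by
    choose π h1 h2 using exists_proj hCne' hCcl hCcv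
    exact ⟨π, h1, h2⟩
  have hπne : ∀ u v, ‖π u - π v‖ ≤ ‖u - v‖ := by
    intro u v
    have key : ‖π u - π v‖ ^ 2 ≤ ⟪u - v, π u - π v⟫ := by
      have h1 := hπchar u (π v) (hπC v)
      have h2 := hπchar v (π u) (hπC u)
      have e1 : ⟪u - π u, π u - π v⟫ ≥ 0 := by
        have e : π v - π u = -(π u - π v) := by abel
        rw [e, inner_neg_right] at h1; linarith
      have e2 : ⟪π v - v, π u - π v⟫ ≥ 0 := by
        have e : π v - v = -(v - π v) := by abel
        rw [e, inner_neg_left]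
        have e' : π u - π v = -(π v - π u) := by abel
        rw [e'] at h2 ⊢
        rw [inner_neg_right] at h2 ⊢
        linarith
      have e3 : u - v = (u - π u) + (π u - π v) + (π v - v) := by abel
      rw [e3, inner_add_left, inner_add_left, real_inner_self_eq_norm_sq]
      linarith
    have h4 := real_inner_le_norm (u - v) (π u - π v)
    rcases eq_or_lt_of_le (norm_nonneg (π u - π v)) with h0 | h0
    · rw [← h0]; exact norm_nonneg _
    · nlinarith
  have hreg : ∀ t ∈ Set.Ioc (0:ℝ) 1,
      ∃ x ∈ C, ∀ y ∈ C, ⟪y - x, T x + t • (x - z₀)⟫ ≥ 0 := by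
    rintro t ⟨ht0, ht1⟩
    have hl1 : (1:ℝ) ≤ ℓ + 1 := by linarith
    set γ : ℝ := t / (ℓ + 1) ^ 2 with hγ
    have hγ0 : 0 < γ := by positivity
    set A : H → H := fun x => T x + t • (x - z₀) with hA
    have hAmono : ∀ x y : H, ⟪x - y, A x - A y⟫ ≥ t * ‖x - y‖ ^ 2 := by
      intro x y
      have e : A x - A y = (T x - T y) + t • (x - y) := by
        rw [hA]; simp only [smul_sub]; abel
      rw [e, inner_add_right, real_inner_smul_right, real_inner_self_eq_norm_sq]
      have := hT_mono x y
      linarith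
    have hAlip : ∀ x y : H, ‖A x - A y‖ ≤ (ℓ + 1) * ‖x - y‖ := by
      intro x y
      have e : A x - A y = (T x - T y) + t • (x - y) := by
        rw [hA]; simp only [smul_sub]; abel
      rw [e]
      refine (norm_add_le _ _).trans ?_
      rw [norm_smul, Real.norm_eq_abs, abs_of_pos ht0]
      have := hT_lip x y
      nlinarith [norm_nonneg (x - y)]
    set s : ℝ := t ^ 2 / (ℓ + 1) ^ 2 with hs
    have hs0 : 0 < s := by positivity
    have hs1 : s ≤ 1 := by
      rw [hs, div_le_one (by positivity)]
      nlinarith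
    set κ : ℝ := 1 - s / 2 with hκ
    have hκ0 : 0 ≤ κ := by rw [hκ]; linarith
    have hκ1 : κ < 1 := by rw [hκ]; linarith
    set Q : H → H := fun x => π (x - γ • A x) with hQ
    have hQlip : ∀ x y, ‖Q x - Q y‖ ≤ κ * ‖x - y‖ := by
      intro x y
      have h1 : ‖Q x - Q y‖ ≤ ‖(x - γ • A x) - (y - γ • A y)‖ := hπne _ _
      have e : (x - γ • A x) - (y - γ • A y) = (x - y) - γ • (A x - A y) := by
        rw [smul_sub]; abel
      have h2 : ‖(x - y) - γ • (A x - A y)‖ ^ 2 ≤ κ ^ 2 * ‖x - y‖ ^ 2 := by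
        rw [norm_sub_sq_real, real_inner_smul_right, norm_smul, Real.norm_eq_abs,
          abs_of_pos hγ0, mul_pow]
        have hd2 : (0:ℝ) ≤ ‖x - y‖ ^ 2 := sq_nonneg _
        have b1 : s * ‖x - y‖ ^ 2 ≤ γ * ⟪x - y, A x - A y⟫ := by
          have h := mul_le_mul_of_nonneg_left (hAmono x y) hγ0.le
          calc s * ‖x - y‖ ^ 2 = γ * (t * ‖x - y‖ ^ 2) := by rw [hγ, hs]; field_simp
          _ ≤ γ * ⟪x - y, A x - A y⟫ := h
        have b2' : ‖A x - A y‖ ^ 2 ≤ (ℓ + 1) ^ 2 * ‖x - y‖ ^ 2 := by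
          have h := pow_le_pow_left₀ (norm_nonneg _) (hAlip x y) 2
          calc ‖A x - A y‖ ^ 2 ≤ ((ℓ + 1) * ‖x - y‖) ^ 2 := h
          _ = (ℓ + 1) ^ 2 * ‖x - y‖ ^ 2 := by ring
        have b2 : γ ^ 2 * ‖A x - A y‖ ^ 2 ≤ s * ‖x - y‖ ^ 2 := by
          have h := mul_le_mul_of_nonneg_left b2' (sq_nonneg γ)
          have e3 : γ ^ 2 * ((ℓ + 1) ^ 2 * ‖x - y‖ ^ 2) = s * ‖x - y‖ ^ 2 := by
            rw [hγ, hs]; field_simp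
          linarith
        have hκsq : (1 - s) * ‖x - y‖ ^ 2 ≤ κ ^ 2 * ‖x - y‖ ^ 2 := by
          have h : 1 - s ≤ κ ^ 2 := by rw [hκ]; nlinarith [sq_nonneg s]
          exact mul_le_mul_of_nonneg_right h hd2
        nlinarith [b1, b2, hκsq]
      have h3 : ‖(x - y) - γ • (A x - A y)‖ ≤ κ * ‖x - y‖ := by
        have h4 := Real.sqrt_le_sqrt h2
        rwa [Real.sqrt_sq (norm_nonneg _), show κ ^ 2 * ‖x - y‖ ^ 2 = (κ * ‖x - y‖) ^ 2 by ring,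
          Real.sqrt_sq (by positivity)] at h4
      calc ‖Q x - Q y‖ ≤ ‖(x - γ • A x) - (y - γ • A y)‖ := h1
      _ = ‖(x - y) - γ • (A x - A y)‖ := by rw [e]
      _ ≤ κ * ‖x - y‖ := h3
    obtain ⟨x, hxC, hfix⟩ := exists_fixedPoint_of_contraction hCne' hCcl
      (fun x => hπC _) hκ0 hκ1 hQlip
    refine ⟨x, hxC, fun y hy => ?_⟩
    have h5 := hπchar (x - γ • A x) y hy
    rw [hfix] at h5
    have e : x - γ • A x - x = -(γ • A x) := by abel
    rw [e, inner_neg_left, real_inner_smul_left] at h5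
    have h6 : 0 ≤ γ * ⟪A x, y - x⟫ := by linarith
    have h7 : 0 ≤ ⟪A x, y - x⟫ := by nlinarith [h6, hγ0]
    rw [real_inner_comm] at h7
    exact h7
  -- choice of a family of regularized solutions
  choose freg hfregC hfregVI using hreg
  set X : ℝ → H := fun t => if h : t ∈ Set.Ioc (0:ℝ) 1 then freg t h else z₀ with hXdef
  have hXeq : ∀ t (ht : t ∈ Set.Ioc (0:ℝ) 1), X t = freg t ht := by
    intro t ht
    simp only [hXdef, dif_pos ht]
  have hXC : ∀ t (ht : t ∈ Set.Ioc (0:ℝ) 1), X t ∈ C := by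
    intro t ht; rw [hXeq t ht]; exact hfregC t ht
  have hXVI : ∀ t (ht : t ∈ Set.Ioc (0:ℝ) 1), ∀ y ∈ C,
      ⟪y - X t, T (X t) + t • (X t - z₀)⟫ ≥ 0 := by
    intro t ht; rw [hXeq t ht]; exact hfregVI t ht
  clear hXdef
  clear_value X
  -- Step 2: the basic relation between two regularized solutions
  have hrel : ∀ t u, t ∈ Set.Ioc (0:ℝ) 1 → u ∈ Set.Ioc (0:ℝ) 1 →
      t * ‖X t - z₀‖ ^ 2 + u * ‖X u - z₀‖ ^ 2 ≤ (t + u) * ⟪X t - z₀, X u - z₀⟫ := by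
    intro t u htm hum
    have s1 := hXVI t htm (X u) (hXC u hum)
    have s2 := hXVI u hum (X t) (hXC t htm)
    rw [inner_add_right, real_inner_smul_right] at s1 s2
    have m' : ⟪X t - X u, T (X t)⟫ - ⟪X t - X u, T (X u)⟫ ≥ 0 := by
      have h := hT_mono (X t) (X u)
      rw [inner_sub_right] at h
      linarith
    have flip : ⟪X u - X t, T (X t)⟫ = -⟪X t - X u, T (X t)⟫ := by
      rw [show X u - X t = -(X t - X u) by abel, inner_neg_left]
    have hcomb : 0 ≤ t * ⟪X u - X t, X t - z₀⟫ + u * ⟪X t - X u, X u - z₀⟫ := by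
      linarith
    have ea : ⟪X u - X t, X t - z₀⟫
        = ⟪X t - z₀, X u - z₀⟫ - ‖X t - z₀‖ ^ 2 := by
      rw [show X u - X t = (X u - z₀) - (X t - z₀) by abel, inner_sub_left,
        real_inner_self_eq_norm_sq, real_inner_comm]
    have eb : ⟪X t - X u, X u - z₀⟫
        = ⟪X t - z₀, X u - z₀⟫ - ‖X u - z₀‖ ^ 2 := by
      rw [show X t - X u = (X t - z₀) - (X u - z₀) by abel, inner_sub_left,
        real_inner_self_eq_norm_sq]
    rw [ea, eb] at hcomb
    nlinarith [hcomb]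
  -- Step 2': monotonicity and Cauchy-type estimate
  have hkey : ∀ t u, t ∈ Set.Ioc (0:ℝ) 1 → u ∈ Set.Ioc (0:ℝ) 1 → t ≤ u →
      ‖X u - z₀‖ ≤ ‖X t - z₀‖ ∧
        ‖X t - X u‖ ^ 2 ≤ ‖X t - z₀‖ ^ 2 - ‖X u - z₀‖ ^ 2 := by
    intro t u htm hum hle
    have P := hrel t u htm hum
    have CS := real_inner_le_norm (X t - z₀) (X u - z₀)
    have ht0 : (0:ℝ) < t := htm.1
    have hu0 : (0:ℝ) < u := hum.1
    have CS' : (t + u) * ⟪X t - z₀, X u - z₀⟫ ≤ (t + u) * (‖X t - z₀‖ * ‖X u - z₀‖) :=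
      mul_le_mul_of_nonneg_left CS (by linarith)
    have hba : ‖X u - z₀‖ ≤ ‖X t - z₀‖ := by
      by_contra hcon
      push_neg at hcon
      have h1 : 0 < (‖X u - z₀‖ - ‖X t - z₀‖) * (u * ‖X u - z₀‖ - t * ‖X t - z₀‖) := by
        apply mul_pos (by linarith)
        have h2 : t * ‖X t - z₀‖ < u * ‖X u - z₀‖ :=
          mul_lt_mul' hle hcon (norm_nonneg _) hu0
        linarith
      nlinarith [P, CS']
    refine ⟨hba, ?_⟩
    have hip : ‖X u - z₀‖ ^ 2 ≤ ⟪X t - z₀, X u - z₀⟫ := by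
      have h2 : (t + u) * ‖X u - z₀‖ ^ 2 ≤ t * ‖X t - z₀‖ ^ 2 + u * ‖X u - z₀‖ ^ 2 := by
        have hsq : ‖X u - z₀‖ ^ 2 ≤ ‖X t - z₀‖ ^ 2 := pow_le_pow_left₀ (norm_nonneg _) hba 2
        nlinarith [mul_le_mul_of_nonneg_left hsq ht0.le]
      have h3 : (t + u) * ‖X u - z₀‖ ^ 2 ≤ (t + u) * ⟪X t - z₀, X u - z₀⟫ := h2.trans P
      have h4 : (0:ℝ) < t + u := by linarith
      exact le_of_mul_le_mul_left h3 h4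
    rw [show X t - X u = (X t - z₀) - (X u - z₀) by abel, norm_sub_sq_real]
    linarith
  -- Step 3: boundedness of the regularization path (the heart of the proof)
  have hbound : ∃ K : ℝ, ∀ t, t ∈ Set.Ioc (0:ℝ) 1 → ‖X t - z₀‖ ≤ K := by
    by_contra hcon
    push_neg at hcon
    have hconstr : ∀ n : ℕ, ∃ t, t ∈ Set.Ioc (0:ℝ) 1 ∧ ((n:ℝ) + 1) ≤ ‖X t - z₀‖ := by
      intro n
      obtain ⟨t, ht, hgt⟩ := hcon ((n:ℝ) + 1)
      exact ⟨t, ht, hgt.le⟩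
    choose sq hsqm hsqR using hconstr
    -- notation
    obtain ⟨xx, hxxd⟩ : ∃ xx : ℕ → H, ∀ n, xx n = X (sq n) := ⟨_, fun _ => rfl⟩
    obtain ⟨R, hRd⟩ : ∃ R : ℕ → ℝ, ∀ n, R n = ‖xx n - z₀‖ := ⟨_, fun _ => rfl⟩
    obtain ⟨uu, huud⟩ : ∃ uu : ℕ → G i, ∀ n, uu n = L i (xx n) := ⟨_, fun _ => rfl⟩
    obtain ⟨DF, hDFd⟩ : ∃ DF : ∀ j : I, ℕ → G j,
        ∀ j n, DF j n = F j (L j (xx n)) - F j (L j z₀) := ⟨_, fun _ _ => rfl⟩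
    set u0 : G i := L i z₀ with hu0d
    set K₁ : ℝ := ‖T z₀‖ with hK₁d
    have hK₁0 : 0 ≤ K₁ := norm_nonneg _
    set a₀ : ℝ := ‖F i u0‖ with ha₀d
    have ha₀0 : 0 ≤ a₀ := norm_nonneg _
    set Mi : ℝ := Real.sqrt (K₁ / ω i) with hMid
    have hMi0 : 0 ≤ Mi := Real.sqrt_nonneg _
    have hR1 : ∀ n : ℕ, (n:ℝ) + 1 ≤ R n := by intro n; rw [hRd, hxxd]; exact hsqR n
    have hRge1 : ∀ n, (1:ℝ) ≤ R n := by
      intro n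
      have h1 := hR1 n
      have h2 : (0:ℝ) ≤ (n:ℝ) := Nat.cast_nonneg n
      linarith
    have hRpos : ∀ n, (0:ℝ) < R n := fun n => lt_of_lt_of_le one_pos (hRge1 n)
    have hsqrtR1 : ∀ n, (1:ℝ) ≤ Real.sqrt (R n) := by
      intro n
      have := Real.sqrt_le_sqrt (hRge1 n)
      rwa [Real.sqrt_one] at this
    -- (F13) vanishing of sqrt terms
    have hsqrtsmall : ∀ B ε : ℝ, 0 ≤ B → 0 < ε →
        ∃ N : ℕ, ∀ n ≥ N, B * Real.sqrt (R n) ≤ ε * R n := by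
      intro B ε hB hε
      refine ⟨Nat.ceil ((B / ε) ^ 2), fun n hn => ?_⟩
      have h1 : ((B / ε) ^ 2 : ℝ) ≤ n := by
        calc ((B / ε) ^ 2 : ℝ) ≤ (Nat.ceil ((B / ε) ^ 2) : ℝ) := Nat.le_ceil _
        _ ≤ n := Nat.cast_le.2 hn
      have h2 : ((B / ε) ^ 2 : ℝ) ≤ R n := by
        have := hR1 n
        linarith
      have h3 : B / ε ≤ Real.sqrt (R n) := by
        have := Real.sqrt_le_sqrt h2
        rwa [Real.sqrt_sq (by positivity)] at this
      have h4 : B ≤ ε * Real.sqrt (R n) := by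
        rw [div_le_iff₀ hε] at h3
        linarith [h3]
      calc B * Real.sqrt (R n) ≤ (ε * Real.sqrt (R n)) * Real.sqrt (R n) :=
        mul_le_mul_of_nonneg_right h4 (Real.sqrt_nonneg _)
      _ = ε * R n := by
        rw [mul_assoc, Real.mul_self_sqrt (le_of_lt (hRpos n))]
    -- (F1) the basic inequality from the variational characterization
    have haT : ∀ n, ⟪xx n - z₀, T (xx n)⟫ ≤ 0 := by
      intro n
      have h := hXVI (sq n) (hsqm n) z₀ hz₀
      rw [← hxxd] at h
      rw [inner_add_right, real_inner_smul_right] at h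
      have e1 : ⟪z₀ - xx n, T (xx n)⟫ = -⟪xx n - z₀, T (xx n)⟫ := by
        rw [show z₀ - xx n = -(xx n - z₀) by abel, inner_neg_left]
      have e2 : ⟪z₀ - xx n, xx n - z₀⟫ = -‖xx n - z₀‖ ^ 2 := by
        rw [show z₀ - xx n = -(xx n - z₀) by abel, inner_neg_left,
          real_inner_self_eq_norm_sq]
      rw [e1, e2] at h
      have h2 := (hsqm n).1
      nlinarith [sq_nonneg ‖xx n - z₀‖]
    -- (F2)
    have hsum : ∀ n, ∑ j, ω j * ⟪L j (xx n - z₀), DF j n⟫ ≤ K₁ * R n := by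
      intro n
      have e : ∑ j, ω j * ⟪L j (xx n - z₀), DF j n⟫ = ⟪xx n - z₀, T (xx n) - T z₀⟫ := by
        rw [hT_inner_sub]
        refine Finset.sum_congr rfl fun j _ => by rw [hDFd]
      rw [e, inner_sub_right]
      have h1 := haT n
      have h2 : -⟪xx n - z₀, T z₀⟫ ≤ ‖xx n - z₀‖ * ‖T z₀‖ := by
        have := abs_real_inner_le_norm (xx n - z₀) (T z₀)
        have h3 := neg_abs_le ⟪xx n - z₀, T z₀⟫
        linarith
      rw [hRd, hK₁d]
      linarith [mul_comm ‖xx n - z₀‖ ‖T z₀‖]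
    -- (F3),(F4)
    have hterm : ∀ n j, ω j * ‖DF j n‖ ^ 2 ≤ ω j * ⟪L j (xx n - z₀), DF j n⟫ := by
      intro n j
      refine mul_le_mul_of_nonneg_left ?_ (hωpos j).le
      have h := hF j (L j (xx n)) (L j z₀)
      rw [← hDFd] at h
      have e : L j (xx n) - L j z₀ = L j (xx n - z₀) := (map_sub (L j) _ _).symm
      rw [e] at h
      exact h
    have htermnn : ∀ n j, 0 ≤ ω j * ⟪L j (xx n - z₀), DF j n⟫ := by
      intro n j
      refine le_trans ?_ (hterm n j)
      exact mul_nonneg (hωpos j).le (sq_nonneg _)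
    -- (F5)
    have hDFi : ∀ n, ‖DF i n‖ ≤ Mi * Real.sqrt (R n) := by
      intro n
      have h1 : ω i * ‖DF i n‖ ^ 2 ≤ K₁ * R n := by
        calc ω i * ‖DF i n‖ ^ 2 ≤ ω i * ⟪L i (xx n - z₀), DF i n⟫ := hterm n i
        _ ≤ ∑ j, ω j * ⟪L j (xx n - z₀), DF j n⟫ :=
          Finset.single_le_sum (fun j _ => htermnn n j) (Finset.mem_univ i)
        _ ≤ K₁ * R n := hsum n
      have h2 : ‖DF i n‖ ^ 2 ≤ K₁ / ω i * R n := by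
        rw [div_mul_eq_mul_div, le_div_iff₀ (hωpos i)]
        calc ‖DF i n‖ ^ 2 * ω i = ω i * ‖DF i n‖ ^ 2 := mul_comm _ _
        _ ≤ K₁ * R n := h1
      have h3 := Real.sqrt_le_sqrt h2
      rw [Real.sqrt_sq (norm_nonneg _)] at h3
      calc ‖DF i n‖ ≤ Real.sqrt (K₁ / ω i * R n) := h3
      _ = Mi * Real.sqrt (R n) := by
        rw [hMid, ← Real.sqrt_mul (div_nonneg hK₁0 (hωpos i).le)]
    -- (F6)
    have hFiu : ∀ n, ‖F i (uu n)‖ ≤ a₀ + Mi * Real.sqrt (R n) := by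
      intro n
      have e : F i (uu n) = DF i n + F i u0 := by
        rw [hDFd, huud, hu0d]; abel
      rw [e]
      calc ‖DF i n + F i u0‖ ≤ ‖DF i n‖ + ‖F i u0‖ := norm_add_le _ _
      _ ≤ Mi * Real.sqrt (R n) + a₀ := by
        have := hDFi n
        rw [ha₀d]
        linarith
      _ = a₀ + Mi * Real.sqrt (R n) := by ring
    -- (F7) lower bound for L i from surjectivity of the adjoint
    obtain ⟨c, hc0, hcineq⟩ : ∃ c : ℝ, 0 < c ∧ ∀ x : H, c * ‖x‖ ≤ ‖L i x‖ := by
      obtain ⟨Cst, hCst0, hCst⟩ :=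
        (ContinuousLinearMap.adjoint (L i)).exists_preimage_norm_le hadj
      refine ⟨1 / Cst, one_div_pos.2 hCst0, fun x => ?_⟩
      obtain ⟨g, hg, hgn⟩ := hCst x
      have h1 : ‖x‖ ^ 2 = ⟪x, x⟫ := (real_inner_self_eq_norm_sq x).symm
      have h2 : ⟪x, x⟫ = ⟪g, L i x⟫ := by
        rw [← hg]
        exact ContinuousLinearMap.adjoint_inner_left (L i) _ g
      have h3 : ⟪g, L i x⟫ ≤ ‖g‖ * ‖L i x‖ := real_inner_le_norm _ _
      have h4 : ‖x‖ ^ 2 ≤ Cst * ‖x‖ * ‖L i x‖ := by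
        calc ‖x‖ ^ 2 = ⟪g, L i x⟫ := by rw [h1, h2]
        _ ≤ ‖g‖ * ‖L i x‖ := h3
        _ ≤ Cst * ‖x‖ * ‖L i x‖ :=
          mul_le_mul_of_nonneg_right hgn (norm_nonneg _)
      rcases eq_or_lt_of_le (norm_nonneg x) with h0 | h0
      · rw [← h0, mul_zero]; exact norm_nonneg _
      · rw [div_mul_eq_mul_div, one_mul, div_le_iff₀ hCst0]
        have h5 : ‖x‖ * ‖x‖ ≤ (‖L i x‖ * Cst) * ‖x‖ := by nlinarith
        exact le_of_mul_le_mul_right h5 h0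
    -- (F8)
    have huU : ∀ n, c * R n - ‖u0‖ ≤ ‖uu n‖ := by
      intro n
      have h1 : c * ‖xx n - z₀‖ ≤ ‖L i (xx n - z₀)‖ := hcineq _
      have e : L i (xx n - z₀) = uu n - u0 := by rw [map_sub, huud, hu0d]
      rw [e] at h1
      have h2 : ‖uu n - u0‖ ≤ ‖uu n‖ + ‖u0‖ := norm_sub_le _ _
      rw [hRd]
      linarith
    have huUup : ∀ n, ‖uu n‖ ≤ ‖u0‖ + ‖L i‖ * R n := by
      intro n
      have e : uu n = u0 + L i (xx n - z₀) := by rw [map_sub, huud, hu0d]; abel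
      rw [e]
      calc ‖u0 + L i (xx n - z₀)‖ ≤ ‖u0‖ + ‖L i (xx n - z₀)‖ := norm_add_le _ _
      _ ≤ ‖u0‖ + ‖L i‖ * R n := by
        have := (L i).le_opNorm (xx n - z₀)
        rw [hRd]
        linarith
    -- division helper
    have hdivi : ∀ a b : ℝ, ω i * a ≤ b → a ≤ b / ω i := by
      intro a b h
      rw [le_div_iff₀ (hωpos i)]
      calc a * ω i = ω i * a := mul_comm _ _
      _ ≤ b := h
    -- (F9)
    set K₂ : ℝ := K₁ / ω i + ‖L i‖ * ‖F i u0 - p i‖ with hK₂d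
    have hK₂0 : 0 ≤ K₂ :=
      add_nonneg (div_nonneg hK₁0 (hωpos i).le) (by positivity)
    have hcterm : ∀ n, ⟪L i (xx n - z₀), F i (uu n) - p i⟫ ≤ K₂ * R n := by
      intro n
      have e : F i (uu n) - p i = DF i n + (F i u0 - p i) := by
        rw [hDFd, huud, hu0d]; abel
      rw [e, inner_add_right]
      have h1 : ⟪L i (xx n - z₀), DF i n⟫ ≤ K₁ / ω i * R n := by
        rw [div_mul_eq_mul_div]
        apply hdivi
        calc ω i * ⟪L i (xx n - z₀), DF i n⟫
            ≤ ∑ j, ω j * ⟪L j (xx n - z₀), DF j n⟫ :=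
          Finset.single_le_sum (fun j _ => htermnn n j) (Finset.mem_univ i)
        _ ≤ K₁ * R n := hsum n
      have h2 : ⟪L i (xx n - z₀), F i u0 - p i⟫ ≤ ‖L i‖ * ‖F i u0 - p i‖ * R n := by
        calc ⟪L i (xx n - z₀), F i u0 - p i⟫ ≤ ‖L i (xx n - z₀)‖ * ‖F i u0 - p i‖ :=
          real_inner_le_norm _ _
        _ ≤ (‖L i‖ * ‖xx n - z₀‖) * ‖F i u0 - p i‖ :=
          mul_le_mul_of_nonneg_right ((L i).le_opNorm _) (norm_nonneg _)
        _ = ‖L i‖ * ‖F i u0 - p i‖ * ‖xx n - z₀‖ := by ring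
        _ = ‖L i‖ * ‖F i u0 - p i‖ * R n := by rw [hRd]
      rw [hK₂d]
      nlinarith [h1, h2]
    -- (F10)
    set K₃ : ℝ := K₂ + ‖L i‖ * ‖p i‖ with hK₃d
    have hK₃0 : 0 ≤ K₃ := add_nonneg hK₂0 (by positivity)
    have huFu : ∀ n, ⟪uu n, F i (uu n)⟫
        ≤ K₃ * R n + ‖u0‖ * (a₀ + Mi * Real.sqrt (R n)) := by
      intro n
      have e1 : uu n = L i (xx n - z₀) + u0 := by rw [map_sub, huud, hu0d]; abel
      have egen : ∀ v : G i, ⟪uu n, v⟫ = ⟪L i (xx n - z₀), v⟫ + ⟪u0, v⟫ := by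
        intro v
        conv_lhs => rw [e1]
        rw [inner_add_left]
      have e2 : ⟪uu n, F i (uu n)⟫ = ⟪L i (xx n - z₀), F i (uu n) - p i⟫
          + ⟪L i (xx n - z₀), p i⟫ + ⟪u0, F i (uu n)⟫ := by
        rw [egen (F i (uu n)), inner_sub_right]
        ring
      rw [e2]
      have h1 := hcterm n
      have h2 : ⟪L i (xx n - z₀), p i⟫ ≤ ‖L i‖ * ‖p i‖ * R n := by
        calc ⟪L i (xx n - z₀), p i⟫ ≤ ‖L i (xx n - z₀)‖ * ‖p i‖ :=
          real_inner_le_norm _ _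
        _ ≤ (‖L i‖ * ‖xx n - z₀‖) * ‖p i‖ :=
          mul_le_mul_of_nonneg_right ((L i).le_opNorm _) (norm_nonneg _)
        _ = ‖L i‖ * ‖p i‖ * ‖xx n - z₀‖ := by ring
        _ = ‖L i‖ * ‖p i‖ * R n := by rw [hRd]
      have h3 : ⟪u0, F i (uu n)⟫ ≤ ‖u0‖ * (a₀ + Mi * Real.sqrt (R n)) := by
        calc ⟪u0, F i (uu n)⟫ ≤ ‖u0‖ * ‖F i (uu n)‖ := real_inner_le_norm _ _
        _ ≤ ‖u0‖ * (a₀ + Mi * Real.sqrt (R n)) :=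
          mul_le_mul_of_nonneg_left (hFiu n) (norm_nonneg _)
      rw [hK₃d]
      nlinarith [h1, h2, h3]
    -- (F11) the fundamental estimate coming from surjectivity of F i
    choose pe hpe using hFsurj
    have hmainineq : ∀ (w : G i) (n : ℕ),
        ⟪uu n, w⟫ ≤ ⟪uu n, F i (uu n)⟫ + ‖pe w‖ * (‖F i (uu n)‖ + ‖w‖) := by
      intro w n
      have h := hF i (uu n) (pe w)
      rw [hpe w] at h
      have h0 : (0:ℝ) ≤ ⟪uu n - pe w, F i (uu n) - w⟫ := le_trans (sq_nonneg _) h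
      rw [inner_sub_left, inner_sub_right, inner_sub_right] at h0
      have h1 : -⟪pe w, F i (uu n)⟫ ≤ ‖pe w‖ * ‖F i (uu n)‖ := by
        have h2 := abs_real_inner_le_norm (pe w) (F i (uu n))
        have h3 := neg_abs_le ⟪pe w, F i (uu n)⟫
        linarith
      have h2 : ⟪pe w, w⟫ ≤ ‖pe w‖ * ‖w‖ := real_inner_le_norm _ _
      nlinarith [h0, h1, h2]
    -- (F12)
    have he : ∀ w : G i, ∃ D : ℝ, 0 ≤ D ∧
        ∀ n, ⟪uu n, w⟫ ≤ K₃ * R n + D * Real.sqrt (R n) := by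
      intro w
      refine ⟨(‖u0‖ + ‖pe w‖) * (a₀ + Mi) + ‖pe w‖ * ‖w‖, by positivity, fun n => ?_⟩
      have h1 := hmainineq w n
      have h2 := huFu n
      have h3 := hFiu n
      have h4 := hsqrtR1 n
      have h5 : ⟪uu n, w⟫ ≤ K₃ * R n + ‖u0‖ * (a₀ + Mi * Real.sqrt (R n))
          + ‖pe w‖ * (a₀ + Mi * Real.sqrt (R n) + ‖w‖) := by
        have h3' := mul_le_mul_of_nonneg_left h3 (norm_nonneg (pe w))
        nlinarith [h1, h2, h3']
      have h6 : ‖u0‖ * (a₀ + Mi * Real.sqrt (R n))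
            + ‖pe w‖ * (a₀ + Mi * Real.sqrt (R n) + ‖w‖)
          ≤ ((‖u0‖ + ‖pe w‖) * (a₀ + Mi) + ‖pe w‖ * ‖w‖) * Real.sqrt (R n) := by
        nlinarith [mul_nonneg (mul_nonneg (norm_nonneg u0) ha₀0) (sub_nonneg.2 h4),
          mul_nonneg (mul_nonneg (norm_nonneg (pe w)) ha₀0) (sub_nonneg.2 h4),
          mul_nonneg (mul_nonneg (norm_nonneg (pe w)) (norm_nonneg w)) (sub_nonneg.2 h4)]
      linarith
    -- (F14) weak vanishing of directions, tested against arbitrary vectors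
    have hP : ∀ w : G i, ∀ ε : ℝ, 0 < ε → ∃ N : ℕ, ∀ n ≥ N, |⟪uu n, w⟫| ≤ ε * R n := by
      intro w ε hε
      set s : ℝ := 2 * (K₃ + 1) / ε with hsd
      have hs0 : 0 < s := by
        rw [hsd]
        exact div_pos (by linarith) hε
      obtain ⟨D₁, hD₁0, hD₁⟩ := he (s • w)
      obtain ⟨D₂, hD₂0, hD₂⟩ := he (-(s • w))
      obtain ⟨N, hN⟩ := hsqrtsmall (max D₁ D₂) 1 (le_max_iff.2 (Or.inl hD₁0)) one_pos
      refine ⟨N, fun n hn => ?_⟩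
      have h1 := hD₁ n
      have h2 := hD₂ n
      rw [inner_neg_right] at h2
      have habs : |⟪uu n, s • w⟫| ≤ K₃ * R n + max D₁ D₂ * Real.sqrt (R n) := by
        rw [abs_le]
        constructor
        · have h3 : D₂ * Real.sqrt (R n) ≤ max D₁ D₂ * Real.sqrt (R n) :=
            mul_le_mul_of_nonneg_right (le_max_right _ _) (Real.sqrt_nonneg _)
          linarith
        · have h3 : D₁ * Real.sqrt (R n) ≤ max D₁ D₂ * Real.sqrt (R n) :=
            mul_le_mul_of_nonneg_right (le_max_left _ _) (Real.sqrt_nonneg _)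
          linarith
      have h3 := hN n hn
      have h4 : |⟪uu n, s • w⟫| ≤ (K₃ + 1) * R n := by linarith
      rw [real_inner_smul_right, abs_mul, abs_of_pos hs0] at h4
      have h5 : s * (ε * R n) = 2 * (K₃ + 1) * R n := by
        rw [hsd]; field_simp
      have h6 : s * |⟪uu n, w⟫| ≤ s * (ε * R n) := by
        rw [h5]
        nlinarith [hRpos n]
      exact le_of_mul_le_mul_left h6 hs0
    -- (F15)
    have hPd : ∀ h : H, ∀ ε : ℝ, 0 < ε →
        ∃ N : ℕ, ∀ n ≥ N, |⟪xx n - z₀, h⟫| ≤ ε * R n := by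
      intro h ε hε
      obtain ⟨g, hg⟩ := hadj h
      obtain ⟨N₁, hN₁⟩ := hP g (ε / 2) (by positivity)
      set N₂ : ℕ := Nat.ceil (2 * |⟪u0, g⟫| / ε) with hN₂d
      refine ⟨max N₁ N₂, fun n hn => ?_⟩
      have hn₁ : n ≥ N₁ := le_trans (le_max_left _ _) hn
      have hn₂ : (N₂:ℝ) ≤ n := Nat.cast_le.2 (le_trans (le_max_right _ _) hn)
      have e : ⟪xx n - z₀, h⟫ = ⟪uu n, g⟫ - ⟪u0, g⟫ := by
        rw [← hg, ContinuousLinearMap.adjoint_inner_right, map_sub, ← huud, ← hu0d,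
          inner_sub_left]
      have h1 := hN₁ n hn₁
      have h2 : |⟪u0, g⟫| ≤ ε / 2 * R n := by
        have h3 : 2 * |⟪u0, g⟫| / ε ≤ (N₂:ℝ) := Nat.le_ceil _
        rw [div_le_iff₀ hε] at h3
        have h4 := hR1 n
        have h5 : (N₂:ℝ) * ε ≤ (n:ℝ) * ε := mul_le_mul_of_nonneg_right hn₂ hε.le
        have h6 : ((n:ℝ) + 1) * ε ≤ R n * ε := mul_le_mul_of_nonneg_right h4 hε.le
        nlinarith [hε.le]
      rw [e, sub_eq_add_neg]
      calc |⟪uu n, g⟫ + -⟪u0, g⟫| ≤ |⟪uu n, g⟫| + |(-⟪u0, g⟫)| := abs_add_le _ _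
      _ = |⟪uu n, g⟫| + |⟪u0, g⟫| := by rw [abs_neg]
      _ ≤ ε / 2 * R n + ε / 2 * R n := add_le_add h1 h2
      _ = ε * R n := by ring
    -- (F16)
    have hg2 : ∀ ε : ℝ, 0 < ε → ∃ N : ℕ, ∀ n ≥ N,
        ω i * ⟪L i (xx n - z₀), DF i n⟫ ≤ ε * R n ∧ ω i * ‖DF i n‖ ^ 2 ≤ ε * R n := by
      intro ε hε
      obtain ⟨N, hN⟩ := hPd (T z₀) ε hε
      refine ⟨N, fun n hn => ?_⟩
      have h1 : ∑ j, ω j * ⟪L j (xx n - z₀), DF j n⟫ ≤ ε * R n := by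
        have e : ∑ j, ω j * ⟪L j (xx n - z₀), DF j n⟫ = ⟪xx n - z₀, T (xx n) - T z₀⟫ := by
          rw [hT_inner_sub]
          exact Finset.sum_congr rfl fun j _ => by rw [hDFd]
        rw [e, inner_sub_right]
        have h2 := haT n
        have h3 := hN n hn
        have h4 := neg_abs_le ⟪xx n - z₀, T z₀⟫
        linarith
      have h5 : ω i * ⟪L i (xx n - z₀), DF i n⟫ ≤ ∑ j, ω j * ⟪L j (xx n - z₀), DF j n⟫ :=
        Finset.single_le_sum (fun j _ => htermnn n j) (Finset.mem_univ i)
      exact ⟨le_trans h5 h1, le_trans (hterm n i) (le_trans h5 h1)⟩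
    -- (F17)
    have hh : ∀ ε : ℝ, 0 < ε → ∃ N : ℕ, ∀ n ≥ N, ⟪uu n, F i (uu n)⟫ ≤ ε * R n := by
      intro ε hε
      obtain ⟨N₁, hN₁⟩ := hg2 (ε / 4 * ω i) (mul_pos (by positivity) (hωpos i))
      obtain ⟨N₂, hN₂⟩ := hPd ((ContinuousLinearMap.adjoint (L i)) (F i u0)) (ε / 4)
        (by positivity)
      obtain ⟨N₃, hN₃⟩ := hsqrtsmall (‖u0‖ * Mi) (ε / 4) (by positivity) (by positivity)
      obtain ⟨N₄, hN₄⟩ := hsqrtsmall |⟪u0, F i u0⟫| (ε / 4) (abs_nonneg _) (by positivity)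
      refine ⟨max (max N₁ N₂) (max N₃ N₄), fun n hn => ?_⟩
      have hn₁ : n ≥ N₁ := le_trans (le_trans (le_max_left _ _) (le_max_left _ _)) hn
      have hn₂ : n ≥ N₂ := le_trans (le_trans (le_max_right _ _) (le_max_left _ _)) hn
      have hn₃ : n ≥ N₃ := le_trans (le_trans (le_max_left _ _) (le_max_right _ _)) hn
      have hn₄ : n ≥ N₄ := le_trans (le_trans (le_max_right _ _) (le_max_right _ _)) hn
      have e1 : uu n = L i (xx n - z₀) + u0 := by rw [map_sub, huud, hu0d]; abel
      have e2 : F i (uu n) = DF i n + F i u0 := by rw [hDFd, huud, hu0d]; abel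
      have egen : ∀ v : G i, ⟪uu n, v⟫ = ⟪L i (xx n - z₀), v⟫ + ⟪u0, v⟫ := by
        intro v
        conv_lhs => rw [e1]
        rw [inner_add_left]
      have e : ⟪uu n, F i (uu n)⟫ = ⟪L i (xx n - z₀), DF i n⟫
          + ⟪L i (xx n - z₀), F i u0⟫
          + ⟪u0, DF i n⟫ + ⟪u0, F i u0⟫ := by
        rw [egen (F i (uu n)), e2, inner_add_right, inner_add_right]
        ring
      have t1 : ⟪L i (xx n - z₀), DF i n⟫ ≤ ε / 4 * R n := by
        have h := (hN₁ n hn₁).1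
        have h2 : ω i * ⟪L i (xx n - z₀), DF i n⟫ ≤ ω i * (ε / 4 * R n) := by linarith
        exact le_of_mul_le_mul_left h2 (hωpos i)
      have t2 : ⟪L i (xx n - z₀), F i u0⟫ ≤ ε / 4 * R n := by
        rw [← ContinuousLinearMap.adjoint_inner_right]
        exact le_trans (le_abs_self _) (hN₂ n hn₂)
      have t3 : ⟪u0, DF i n⟫ ≤ ε / 4 * R n := by
        calc ⟪u0, DF i n⟫ ≤ ‖u0‖ * ‖DF i n‖ := real_inner_le_norm _ _
        _ ≤ ‖u0‖ * (Mi * Real.sqrt (R n)) :=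
          mul_le_mul_of_nonneg_left (hDFi n) (norm_nonneg _)
        _ = ‖u0‖ * Mi * Real.sqrt (R n) := by ring
        _ ≤ ε / 4 * R n := hN₃ n hn₃
      have t4 : ⟪u0, F i u0⟫ ≤ ε / 4 * R n := by
        have h1 := hsqrtR1 n
        calc ⟪u0, F i u0⟫ ≤ |⟪u0, F i u0⟫| := le_abs_self _
        _ ≤ |⟪u0, F i u0⟫| * Real.sqrt (R n) := le_mul_of_one_le_right (abs_nonneg _) h1
        _ ≤ ε / 4 * R n := hN₄ n hn₄
      rw [e]
      linarith
    -- (F18) Baire category: some closed set of images has interior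
    have hcover : (⋃ k : ℕ, closure (F i '' Metric.closedBall 0 k)) = Set.univ := by
      ext w
      simp only [Set.mem_iUnion, Set.mem_univ, iff_true]
      refine ⟨Nat.ceil ‖pe w‖, subset_closure ⟨pe w, ?_, hpe w⟩⟩
      rw [Metric.mem_closedBall, dist_zero_right]
      exact Nat.le_ceil _
    obtain ⟨k₀, hk₀⟩ := nonempty_interior_of_iUnion_of_closed
      (fun k : ℕ => isClosed_closure) hcover
    obtain ⟨wh, hwh⟩ := hk₀
    obtain ⟨δ, hδ0, hball⟩ := Metric.isOpen_iff.1 isOpen_interior wh hwh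
    have hball' : Metric.ball wh δ ⊆ closure (F i '' Metric.closedBall 0 k₀) :=
      le_trans hball interior_subset
    -- (F19) the estimate transferred to the closure
    have hj : ∀ (n : ℕ) (w : G i), w ∈ closure (F i '' Metric.closedBall (0:G i) k₀) →
        ⟪uu n, w⟫ ≤ ⟪uu n, F i (uu n)⟫ + (k₀:ℝ) * (‖F i (uu n)‖ + ‖w‖) := by
      intro n w hw
      have hcl : closure (F i '' Metric.closedBall (0:G i) k₀)
          ⊆ {w : G i | ⟪uu n, w⟫
              ≤ ⟪uu n, F i (uu n)⟫ + (k₀:ℝ) * (‖F i (uu n)‖ + ‖w‖)} := by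
        apply closure_minimal
        · rintro _ ⟨g, hgball, rfl⟩
          have hgn : ‖g‖ ≤ (k₀:ℝ) := by
            rw [Metric.mem_closedBall, dist_zero_right] at hgball
            exact hgball
          have h := hF i (uu n) g
          have h0 : (0:ℝ) ≤ ⟪uu n - g, F i (uu n) - F i g⟫ := le_trans (sq_nonneg _) h
          rw [inner_sub_left, inner_sub_right, inner_sub_right] at h0
          have h1 : -⟪g, F i (uu n)⟫ ≤ ‖g‖ * ‖F i (uu n)‖ := by
            have h2 := abs_real_inner_le_norm g (F i (uu n))
            have h3 := neg_abs_le ⟪g, F i (uu n)⟫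
            linarith
          have h2 : ⟪g, F i g⟫ ≤ ‖g‖ * ‖F i g‖ := real_inner_le_norm _ _
          simp only [Set.mem_setOf_eq]
          have h3 : ‖g‖ * ‖F i (uu n)‖ ≤ (k₀:ℝ) * ‖F i (uu n)‖ :=
            mul_le_mul_of_nonneg_right hgn (norm_nonneg _)
          have h4 : ‖g‖ * ‖F i g‖ ≤ (k₀:ℝ) * ‖F i g‖ :=
            mul_le_mul_of_nonneg_right hgn (norm_nonneg _)
          nlinarith [h0, h1, h2, h3, h4]
        · apply isClosed_le
          · exact Continuous.inner continuous_const continuous_id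
          · exact continuous_const.add
              (continuous_const.mul (continuous_const.add continuous_norm))
      exact hcl hw
    -- (F20) the final contradiction
    set ε : ℝ := δ * c / 16 with hεd
    have hε0 : 0 < ε := by
      rw [hεd]
      exact div_pos (mul_pos hδ0 hc0) (by norm_num)
    have hBnn : (0:ℝ) ≤ (k₀:ℝ) * (a₀ + ‖wh‖ + δ / 2) + δ / 2 * ‖u0‖ := by
      have h1 : (0:ℝ) ≤ a₀ + ‖wh‖ + δ / 2 := by
        have := norm_nonneg wh
        linarith
      have h2 : (0:ℝ) ≤ (k₀:ℝ) := Nat.cast_nonneg k₀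
      have h3 : (0:ℝ) ≤ δ / 2 * ‖u0‖ := mul_nonneg (by linarith) (norm_nonneg _)
      nlinarith
    obtain ⟨N₁, hN₁⟩ := hP wh ε hε0
    obtain ⟨N₂, hN₂⟩ := hh ε hε0
    obtain ⟨N₃, hN₃⟩ := hsqrtsmall ((k₀:ℝ) * Mi) ε
      (mul_nonneg (Nat.cast_nonneg k₀) hMi0) hε0
    obtain ⟨N₄, hN₄⟩ := hsqrtsmall ((k₀:ℝ) * (a₀ + ‖wh‖ + δ / 2) + δ / 2 * ‖u0‖) ε hBnn hε0
    set N₅ : ℕ := Nat.ceil (‖u0‖ / c) with hN₅d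
    set n : ℕ := max (max (max N₁ N₂) (max N₃ N₄)) N₅ with hnd
    have hn₁ : n ≥ N₁ := le_trans (le_trans (le_max_left _ _) (le_max_left _ _))
      (le_max_left _ _)
    have hn₂ : n ≥ N₂ := le_trans (le_trans (le_max_right _ _) (le_max_left _ _))
      (le_max_left _ _)
    have hn₃ : n ≥ N₃ := le_trans (le_trans (le_max_left _ _) (le_max_right _ _))
      (le_max_left _ _)
    have hn₄ : n ≥ N₄ := le_trans (le_trans (le_max_right _ _) (le_max_right _ _))
      (le_max_left _ _)
    have hn₅ : n ≥ N₅ := le_max_right _ _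
    -- positivity of ‖uu n‖
    have hupos : 0 < ‖uu n‖ := by
      have h1 := huU n
      have h2 : ‖u0‖ < c * R n := by
        have h3 : ‖u0‖ / c ≤ (N₅:ℝ) := Nat.le_ceil _
        have h4 : (N₅:ℝ) ≤ (n:ℝ) := Nat.cast_le.2 hn₅
        have h5 := hR1 n
        rw [div_le_iff₀ hc0] at h3
        nlinarith [hc0]
      linarith
    -- the test vector
    set w' : G i := wh + (δ / 2) • (‖uu n‖⁻¹ • uu n) with hw'd
    have hw'mem : w' ∈ Metric.ball wh δ := by
      rw [Metric.mem_ball, dist_eq_norm, hw'd]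
      have e : wh + (δ / 2) • (‖uu n‖⁻¹ • uu n) - wh = (δ / 2) • (‖uu n‖⁻¹ • uu n) := by
        abel
      rw [e, norm_smul, norm_smul, norm_inv, norm_norm,
        inv_mul_cancel₀ (ne_of_gt hupos), mul_one, Real.norm_eq_abs,
        abs_of_pos (by linarith : (0:ℝ) < δ / 2)]
      linarith
    have hineq := hj n w' (hball' hw'mem)
    have hinner_w' : ⟪uu n, w'⟫ = ⟪uu n, wh⟫ + δ / 2 * ‖uu n‖ := by
      rw [hw'd, inner_add_right, real_inner_smul_right, real_inner_smul_right,
        real_inner_self_eq_norm_sq]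
      have e2 : ‖uu n‖⁻¹ * ‖uu n‖ ^ 2 = ‖uu n‖ := by
        rw [pow_two, inv_mul_cancel_left₀ (ne_of_gt hupos)]
      rw [e2]
    have hw'norm : ‖w'‖ ≤ ‖wh‖ + δ / 2 := by
      rw [hw'd]
      refine (norm_add_le _ _).trans ?_
      rw [norm_smul, norm_smul, norm_inv, norm_norm,
        inv_mul_cancel₀ (ne_of_gt hupos), mul_one, Real.norm_eq_abs,
        abs_of_pos (by linarith : (0:ℝ) < δ / 2)]
    -- the bounds
    have b1 : |⟪uu n, wh⟫| ≤ ε * R n := hN₁ n hn₁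
    have b2 : ⟪uu n, F i (uu n)⟫ ≤ ε * R n := hN₂ n hn₂
    have b3 : (k₀:ℝ) * Mi * Real.sqrt (R n) ≤ ε * R n := hN₃ n hn₃
    have b4 : ((k₀:ℝ) * (a₀ + ‖wh‖ + δ / 2) + δ / 2 * ‖u0‖) * Real.sqrt (R n)
        ≤ ε * R n := hN₄ n hn₄
    have b4' : (k₀:ℝ) * (a₀ + ‖wh‖ + δ / 2) + δ / 2 * ‖u0‖ ≤ ε * R n := by
      have h1 := hsqrtR1 n
      nlinarith [b4, hBnn]
    have hFb : ‖F i (uu n)‖ ≤ a₀ + Mi * Real.sqrt (R n) := hFiu n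
    have hchain : δ / 2 * ‖uu n‖ ≤ 4 * (ε * R n) + δ / 2 * ‖u0‖ := by
      rw [hinner_w'] at hineq
      have h2 : -⟪uu n, wh⟫ ≤ ε * R n := by
        have h3 := neg_abs_le ⟪uu n, wh⟫
        linarith
      have h3 : (k₀:ℝ) * ‖F i (uu n)‖ ≤ (k₀:ℝ) * a₀ + (k₀:ℝ) * Mi * Real.sqrt (R n) := by
        have h4 := mul_le_mul_of_nonneg_left hFb (Nat.cast_nonneg k₀ : (0:ℝ) ≤ k₀)
        nlinarith [h4]
      have h4 : (k₀:ℝ) * ‖w'‖ ≤ (k₀:ℝ) * (‖wh‖ + δ / 2) :=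
        mul_le_mul_of_nonneg_left hw'norm (Nat.cast_nonneg k₀)
      have hδu : (0:ℝ) ≤ δ / 2 * ‖u0‖ := mul_nonneg (by linarith) (norm_nonneg _)
      nlinarith [hineq, h2, h3, h4, b2, b3, b4', hδu]
    have hlow2 : δ / 2 * (c * R n - ‖u0‖) ≤ δ / 2 * ‖uu n‖ :=
      mul_le_mul_of_nonneg_left (huU n) (by linarith)
    have hfin : δ * c / 2 * R n ≤ 5 * (ε * R n) := by
      have h5 : δ / 2 * ‖u0‖ ≤ ε * R n := by
        have h6 : (0:ℝ) ≤ (k₀:ℝ) * (a₀ + ‖wh‖ + δ / 2) := by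
          have h7 : (0:ℝ) ≤ a₀ + ‖wh‖ + δ / 2 := by
            have := norm_nonneg wh
            linarith
          exact mul_nonneg (Nat.cast_nonneg k₀) h7
        linarith
      nlinarith [hchain, hlow2, h5]
    rw [hεd] at hfin
    nlinarith [hRpos n, mul_pos (mul_pos hδ0 hc0) (hRpos n)]



  -- Step 4: convergence of the path and passage to the limit
  obtain ⟨K, hK⟩ := hbound
  set seq : ℕ → ℝ := fun n => 1 / (n + 1) with hseq
  have hseqm : ∀ n : ℕ, seq n ∈ Set.Ioc (0:ℝ) 1 := by
    intro n
    constructor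
    · positivity
    · rw [hseq]
      rw [div_le_one (by positivity)]
      have : (0:ℝ) ≤ (n:ℝ) := Nat.cast_nonneg n
      linarith
  have hanti : ∀ m n : ℕ, m ≤ n → seq n ≤ seq m := by
    intro m n h
    apply one_div_le_one_div_of_le (by positivity)
    have : (m:ℝ) ≤ (n:ℝ) := Nat.cast_le.2 h
    linarith
  set ys : ℕ → H := fun n => X (seq n) with hys
  set r2 : ℕ → ℝ := fun n => ‖ys n - z₀‖ ^ 2 with hr2
  have hr2mono : Monotone r2 := by
    intro m n h
    exact pow_le_pow_left₀ (norm_nonneg _)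
      ((hkey (seq n) (seq m) (hseqm n) (hseqm m) (hanti m n h)).1) 2
  have hr2bdd : BddAbove (Set.range r2) := by
    refine ⟨K ^ 2, ?_⟩
    rintro _ ⟨n, rfl⟩
    exact pow_le_pow_left₀ (norm_nonneg _) (hK _ (hseqm n)) 2
  have hr2cauchy : CauchySeq r2 := (tendsto_atTop_ciSup hr2mono hr2bdd).cauchySeq
  have hycauchy : CauchySeq ys := by
    rw [Metric.cauchySeq_iff]
    intro ε hε
    obtain ⟨N, hN⟩ := Metric.cauchySeq_iff.1 hr2cauchy (ε ^ 2) (by positivity)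
    have main : ∀ a b : ℕ, N ≤ a → N ≤ b → a ≤ b → dist (ys b) (ys a) < ε := by
      intro a b ha hb hab
      have h1 := (hkey (seq b) (seq a) (hseqm b) (hseqm a) (hanti a b hab)).2
      have h2 := hN b hb a ha
      rw [Real.dist_eq] at h2
      have h3 : ‖ys b - ys a‖ ^ 2 < ε ^ 2 := by
        calc ‖ys b - ys a‖ ^ 2 ≤ r2 b - r2 a := h1
        _ ≤ |r2 b - r2 a| := le_abs_self _
        _ < ε ^ 2 := h2
      rw [dist_eq_norm]
      nlinarith [norm_nonneg (ys b - ys a)]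
    refine ⟨N, fun m hm n hn => ?_⟩
    rcases le_total m n with h | h
    · have := main m n hm hn h
      rwa [dist_comm] at this
    · exact main n m hn hm h
  obtain ⟨xs, hxs⟩ := cauchySeq_tendsto_of_complete hycauchy
  have hxsC : xs ∈ C := hCcl.mem_of_tendsto hxs
    (Filter.Eventually.of_forall fun n => hXC _ (hseqm n))
  refine ⟨xs, hxsC, fun yy hyy => ?_⟩
  have hVIn : ∀ n, ⟪yy - ys n, T (ys n) + seq n • (ys n - z₀)⟫ ≥ 0 := fun n =>
    hXVI _ (hseqm n) yy hyy
  have hynorm : Filter.Tendsto (fun n => ‖ys n - xs‖) Filter.atTop (nhds 0) := by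
    rw [← tendsto_iff_norm_sub_tendsto_zero]
    exact hxs
  have hTlim : Filter.Tendsto (fun n => T (ys n)) Filter.atTop (nhds (T xs)) := by
    rw [tendsto_iff_norm_sub_tendsto_zero]
    refine squeeze_zero (fun n => norm_nonneg _) (fun n => hT_lip (ys n) xs) ?_
    have := hynorm.const_mul ℓ
    simpa using this
  have hpert : Filter.Tendsto (fun n => seq n • (ys n - z₀)) Filter.atTop (nhds 0) := by
    rw [tendsto_zero_iff_norm_tendsto_zero]
    have hb : ∀ n : ℕ, ‖seq n • (ys n - z₀)‖ ≤ (max K 0) * (1 / (n + 1)) := by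
      intro n
      rw [norm_smul, Real.norm_eq_abs, abs_of_pos (hseqm n).1, hseq]
      rw [mul_comm]
      apply mul_le_mul_of_nonneg_right ((hK _ (hseqm n)).trans (le_max_left _ _))
      positivity
    refine squeeze_zero (fun n => norm_nonneg _) hb ?_
    have := tendsto_one_div_add_atTop_nhds_zero_nat.const_mul (max K 0)
    simpa using this
  have hlim : Filter.Tendsto (fun n => ⟪yy - ys n, T (ys n) + seq n • (ys n - z₀)⟫)
      Filter.atTop (nhds ⟪yy - xs, T xs + 0⟫) :=
    Filter.Tendsto.inner (tendsto_const_nhds.sub hxs) (hTlim.add hpert)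
  have hfinal : (0:ℝ) ≤ ⟪yy - xs, T xs + 0⟫ := ge_of_tendsto' hlim hVIn
  rw [add_zero] at hfinal
  rw [ge_iff_le, ← hT_inner xs (yy - xs)]
  exact hfinal
end
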